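/- arXiv:2207.12109 — 6 statements merged into one kernel-verified Lean document; each statement's English description precedes it below -/
import Mathlib

section
/- Let K ≥ 2 be an integer, λ > 0 a real, and for each k = 1,…,K let m_k ≥ 1, n_k ≥ m_k be integers, μ_k > 0 a real, and φ_k : [0,∞) → ℝ defined by φ_k(0) = 0 and φ_k(t) = t·B_{m_k,n_k}(t/μ_k) for t > 0. Then every minimizer (λ_1*,…,λ_K*) of ∑_{k=1}^K φ_k(λ_k) over vectors with λ_k ∈ [0,λ] for each k and ∑_{k=1}^K λ_k = λ satisfies 0 < λ_k* < λ for every k. -/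
/-- `a_j(r)` coefficients of the M/M/m/n queue. -/
noncomputable def aCoef (m j : ℕ) (r : ℝ) : ℝ :=
  if j ≤ m then r ^ j / (Nat.factorial j : ℝ)
  else (r ^ m / (Nat.factorial m : ℝ)) * (r / (m : ℝ)) ^ (j - m)

/-- Blocking probability `B_{m,n}(r)` of the M/M/m/n queue with offered load `r`. -/
noncomputable def Bmn (m n : ℕ) (r : ℝ) : ℝ :=
  aCoef m n r / ∑ j ∈ Finset.range (n + 1), aCoef m j r

/-- Mean number in system `L_{m,n}(r)` of the M/M/m/n queue with offered load `r`. -/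
noncomputable def Lmn (m n : ℕ) (r : ℝ) : ℝ :=
  (∑ j ∈ Finset.range (n + 1), (j : ℝ) * aCoef m j r) /
    ∑ j ∈ Finset.range (n + 1), aCoef m j r

/-- Erlang-B formula `B_m(r)`. -/
noncomputable def erlangB (m : ℕ) (r : ℝ) : ℝ :=
  (r ^ m / (Nat.factorial m : ℝ)) / ∑ j ∈ Finset.range (m + 1), r ^ j / (Nat.factorial j : ℝ)

lemma aCoef_eq_d (m j : ℕ) (r : ℝ) : aCoef m j r = aCoef m j 1 * r ^ j := by
  unfold aCoef
  split_ifs with h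
  · rw [one_pow]; ring
  · have hmj : m ≤ j := le_of_lt (lt_of_not_ge h)
    have hr : r ^ j = r ^ m * r ^ (j - m) := by
      rw [← pow_add, Nat.add_sub_cancel' hmj]
    rw [hr, div_pow, div_pow, one_pow]
    ring

lemma aCoef_nonneg (m j : ℕ) {r : ℝ} (hr : 0 ≤ r) : 0 ≤ aCoef m j r := by
  unfold aCoef
  split_ifs with h
  · positivity
  · have h1 : (0:ℝ) ≤ (m:ℝ) := Nat.cast_nonneg m
    have h2 : (0:ℝ) ≤ r / m := div_nonneg hr h1
    positivity

lemma aCoef_pos (m j : ℕ) (hm : 1 ≤ m) {r : ℝ} (hr : 0 < r) : 0 < aCoef m j r := by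
  have hm' : (0:ℝ) < (m:ℝ) := by exact_mod_cast hm
  unfold aCoef
  split_ifs with h
  · positivity
  · have h2 : (0:ℝ) < r / m := div_pos hr hm'
    positivity

lemma one_le_sum_aCoef (m n : ℕ) {r : ℝ} (hr : 0 ≤ r) :
    1 ≤ ∑ j ∈ Finset.range (n + 1), aCoef m j r := by
  have h0 : aCoef m 0 r = 1 := by unfold aCoef; simp
  calc (1:ℝ) = aCoef m 0 r := h0.symm
    _ ≤ _ := Finset.single_le_sum (f := fun j => aCoef m j r)
        (fun i _ => aCoef_nonneg m i hr) (Finset.mem_range.mpr (Nat.succ_pos n))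

lemma sum_aCoef_pos (m n : ℕ) {r : ℝ} (hr : 0 ≤ r) :
    0 < ∑ j ∈ Finset.range (n + 1), aCoef m j r :=
  lt_of_lt_of_le one_pos (one_le_sum_aCoef m n hr)

lemma Bmn_pos (m n : ℕ) (hm : 1 ≤ m) {r : ℝ} (hr : 0 < r) : 0 < Bmn m n r :=
  div_pos (aCoef_pos m n hm hr) (sum_aCoef_pos m n hr.le)

lemma pow_key {r1 r2 : ℝ} (h1 : 0 ≤ r1) (h12 : r1 ≤ r2) {j n : ℕ} (hjn : j ≤ n) :
    r1 ^ n * r2 ^ j ≤ r2 ^ n * r1 ^ j := by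
  obtain ⟨t, rfl⟩ := Nat.exists_eq_add_of_le hjn
  rw [pow_add, pow_add]
  have h2 : 0 ≤ r2 := le_trans h1 h12
  have ht : r1 ^ t ≤ r2 ^ t := pow_le_pow_left₀ h1 h12 t
  have hp1 : 0 ≤ r1 ^ j := pow_nonneg h1 j
  have hp2 : 0 ≤ r2 ^ j := pow_nonneg h2 j
  nlinarith [mul_le_mul_of_nonneg_left ht (mul_nonneg hp1 hp2)]

lemma Bmn_mono (m n : ℕ) (hm : 1 ≤ m) {r1 r2 : ℝ} (h1 : 0 ≤ r1) (h12 : r1 ≤ r2) :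
    Bmn m n r1 ≤ Bmn m n r2 := by
  have h2 : 0 ≤ r2 := h1.trans h12
  have S1 : 0 < ∑ j ∈ Finset.range (n + 1), aCoef m j r1 := sum_aCoef_pos m n h1
  have S2 : 0 < ∑ j ∈ Finset.range (n + 1), aCoef m j r2 := sum_aCoef_pos m n h2
  unfold Bmn
  rw [div_le_div_iff₀ S1 S2, Finset.mul_sum, Finset.mul_sum]
  apply Finset.sum_le_sum
  intro j hj
  have hjn : j ≤ n := Nat.lt_succ_iff.mp (Finset.mem_range.mp hj)
  rw [aCoef_eq_d m n r1, aCoef_eq_d m n r2, aCoef_eq_d m j r1, aCoef_eq_d m j r2]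
  have hd1 : 0 ≤ aCoef m n 1 := aCoef_nonneg m n zero_le_one
  have hd2 : 0 ≤ aCoef m j 1 := aCoef_nonneg m j zero_le_one
  nlinarith [mul_le_mul_of_nonneg_left (pow_key h1 h12 hjn) (mul_nonneg hd1 hd2)]

lemma Bmn_le_lin (m n : ℕ) (hn : 1 ≤ n) {r : ℝ} (h0 : 0 ≤ r) (h1 : r ≤ 1) :
    Bmn m n r ≤ aCoef m n 1 * r := by
  have hS : 1 ≤ ∑ j ∈ Finset.range (n + 1), aCoef m j r := one_le_sum_aCoef m n h0
  have hnum : 0 ≤ aCoef m n r := aCoef_nonneg m n h0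
  have step1 : Bmn m n r ≤ aCoef m n r := div_le_self hnum hS
  rw [aCoef_eq_d] at step1
  have hrn : r ^ n ≤ r := by
    calc r ^ n ≤ r ^ 1 := pow_le_pow_of_le_one h0 h1 hn
      _ = r := pow_one r
  have hd : 0 ≤ aCoef m n 1 := aCoef_nonneg m n zero_le_one
  nlinarith


/-- every OBS minimizer routes a positive fraction of traffic to every queue. -/
theorem stmt_11 (K : ℕ) (hK : 2 ≤ K) (lam : ℝ) (hlam : 0 < lam)
    (m n : Fin K → ℕ) (μ : Fin K → ℝ)
    (hm : ∀ k, 1 ≤ m k) (hn : ∀ k, m k ≤ n k) (hμ : ∀ k, 0 < μ k)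
    (φ : Fin K → ℝ → ℝ) (hφ0 : ∀ k, φ k 0 = 0)
    (hφ : ∀ k, ∀ t : ℝ, 0 < t → φ k t = t * Bmn (m k) (n k) (t / μ k))
    (v : Fin K → ℝ)
    (hfeas : (∀ k, v k ∈ Set.Icc (0 : ℝ) lam) ∧ ∑ k, v k = lam)
    (hmin : ∀ w : Fin K → ℝ, ((∀ k, w k ∈ Set.Icc (0 : ℝ) lam) ∧ ∑ k, w k = lam) →
      ∑ k, φ k (v k) ≤ ∑ k, φ k (w k)) :
    ∀ k, 0 < v k ∧ v k < lam := by
  obtain ⟨hIcc, hsum⟩ := hfeas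
  have hge : ∀ k, 0 ≤ v k := fun k => (hIcc k).1
  have hle : ∀ k, v k ≤ lam := fun k => (hIcc k).2
  have key : ∀ k, 0 < v k := by
    intro k
    by_contra hk
    have hvk : v k = 0 := le_antisymm (not_lt.mp hk) (hge k)
    have hex : ∃ j, j ≠ k ∧ 0 < v j := by
      by_contra h'
      push_neg at h'
      have hz : ∀ i, v i = 0 := by
        intro i
        by_cases hi : i = k
        · rw [hi, hvk]
        · exact le_antisymm (h' i hi) (hge i)
      have h0 : ∑ i, v i = 0 := Finset.sum_eq_zero (fun i _ => hz i)
      rw [hsum] at h0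
      linarith
    obtain ⟨j, hjk, hvj⟩ := hex
    have hμj := hμ j
    have hμk := hμ k
    have hc : 0 < Bmn (m j) (n j) (v j / 2 / μ j) :=
      Bmn_pos (m j) (n j) (hm j) (by positivity)
    set c : ℝ := Bmn (m j) (n j) (v j / 2 / μ j) with hc_def
    have hD : 0 < aCoef (m k) (n k) 1 := aCoef_pos (m k) (n k) (hm k) one_pos
    set D : ℝ := aCoef (m k) (n k) 1 with hD_def
    set ε : ℝ := min (v j / 2) (min (μ k) (c * μ k / (2 * D))) with hε_def
    have hε0 : 0 < ε := by
      apply lt_min (by linarith)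
      apply lt_min hμk
      positivity
    have hε1 : ε ≤ v j / 2 := min_le_left _ _
    have hε2 : ε ≤ μ k := le_trans (min_le_right _ _) (min_le_left _ _)
    have hε3 : ε ≤ c * μ k / (2 * D) := le_trans (min_le_right _ _) (min_le_right _ _)
    have hnk : 1 ≤ n k := le_trans (hm k) (hn k)
    -- upper bound on φ k ε
    have hφk : φ k ε ≤ ε * (c / 2) := by
      rw [hφ k ε hε0]
      have harg0 : 0 ≤ ε / μ k := by positivity
      have harg1 : ε / μ k ≤ 1 := by rw [div_le_one hμk]; exact hε2
      have hB : Bmn (m k) (n k) (ε / μ k) ≤ D * (ε / μ k) := by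
        rw [hD_def]; exact Bmn_le_lin (m k) (n k) hnk harg0 harg1
      have h2 : D * (ε / μ k) ≤ c / 2 := by
        have h' : ε * (2 * D) ≤ c * μ k := (le_div_iff₀ (by positivity)).mp hε3
        rw [show D * (ε / μ k) = D * ε / μ k by ring, div_le_div_iff₀ hμk two_pos]
        nlinarith
      calc ε * Bmn (m k) (n k) (ε / μ k) ≤ ε * (D * (ε / μ k)) :=
            mul_le_mul_of_nonneg_left hB hε0.le
        _ ≤ ε * (c / 2) := mul_le_mul_of_nonneg_left h2 hε0.le
    -- lower bound on the decrease at j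
    have hvje : 0 < v j - ε := by linarith
    have hφj : ε * c ≤ φ j (v j) - φ j (v j - ε) := by
      rw [hφ j (v j) hvj, hφ j (v j - ε) hvje]
      have hB1 : Bmn (m j) (n j) ((v j - ε) / μ j) ≤ Bmn (m j) (n j) (v j / μ j) :=
        Bmn_mono (m j) (n j) (hm j) (by positivity)
          ((div_le_div_iff_of_pos_right hμj).mpr (by linarith))
      have hB2 : c ≤ Bmn (m j) (n j) ((v j - ε) / μ j) := by
        rw [hc_def]
        exact Bmn_mono (m j) (n j) (hm j) (by positivity)
          ((div_le_div_iff_of_pos_right hμj).mpr (by linarith))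
      nlinarith [mul_le_mul_of_nonneg_left hB1 hvj.le,
        mul_le_mul_of_nonneg_left hB2 hε0.le]
    -- construct the better point
    set w : Fin K → ℝ := fun i => if i = k then ε else if i = j then v j - ε else v i
      with hw_def
    have hwfeas : (∀ i, w i ∈ Set.Icc (0 : ℝ) lam) ∧ ∑ i, w i = lam := by
      constructor
      · intro i
        by_cases hik : i = k
        · subst hik
          simp only [hw_def, if_pos rfl]
          exact ⟨hε0.le, by linarith [hle j]⟩
        · by_cases hij : i = j
          · subst hij
            have hwi : w i = v i - ε := by simp [hw_def, hik]
            rw [hwi]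
            exact ⟨hvje.le, by linarith [hle i]⟩
          · simp only [hw_def, if_neg hik, if_neg hij]
            exact hIcc i
      · have hsplit : ∀ i, w i = v i + (if i = k then ε else 0) - (if i = j then ε else 0) := by
          intro i
          by_cases hik : i = k
          · subst hik
            simp [hw_def, Ne.symm hjk, hvk]
          · by_cases hij : i = j
            · subst hij
              simp [hw_def, hik]
            · simp [hw_def, hik, hij]
        rw [Finset.sum_congr rfl (fun i _ => hsplit i), Finset.sum_sub_distrib,
          Finset.sum_add_distrib]
        simp [Finset.sum_ite_eq', hsum]
    have hobj : ∑ i, φ i (w i) =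
        ∑ i, φ i (v i) + (φ k ε + (φ j (v j - ε) - φ j (v j))) := by
      have hsplit : ∀ i, φ i (w i) = φ i (v i) + (if i = k then φ k ε else 0)
          + (if i = j then φ j (v j - ε) - φ j (v j) else 0) := by
        intro i
        by_cases hik : i = k
        · subst hik
          simp [hw_def, Ne.symm hjk, hvk, hφ0 i]
        · by_cases hij : i = j
          · subst hij
            simp [hw_def, hik]
          · simp [hw_def, hik, hij]
      rw [Finset.sum_congr rfl (fun i _ => hsplit i), Finset.sum_add_distrib,
        Finset.sum_add_distrib]
      simp [Finset.sum_ite_eq']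
      ring
    have hlt : ∑ i, φ i (w i) < ∑ i, φ i (v i) := by
      rw [hobj]
      nlinarith [mul_pos hε0 hc]
    exact absurd (hmin w hwfeas) (not_le.mpr hlt)
  intro k
  refine ⟨key k, ?_⟩
  obtain ⟨j, hj⟩ : ∃ j : Fin K, j ≠ k := by
    have h1 : 1 < Fintype.card (Fin K) := by simp; omega
    exact Fintype.exists_ne_of_one_lt_card h1 k
  have hsum' : ∑ i ∈ Finset.univ.erase k, v i + v k = lam := by
    rw [Finset.sum_erase_add _ _ (Finset.mem_univ k)]; exact hsum
  have hvj : v j ≤ ∑ i ∈ Finset.univ.erase k, v i :=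
    Finset.single_le_sum (fun i _ => hge i) (Finset.mem_erase.mpr ⟨hj, Finset.mem_univ j⟩)
  linarith [key j]
end

section
/- Let K ≥ 1 be an integer, λ > 0 a real, m ≥ 1 and n ≥ m integers, and μ_1,…,μ_K > 0 reals. Consider minimizing ∑_{k=1}^K φ_k(λ_k) over vectors (λ_1,…,λ_K) with λ_k ∈ [0,λ] for each k and ∑_{k=1}^K λ_k = λ, where φ_k(0) = 0 and φ_k(t) = t·B_{m,n}(t/μ_k) for t > 0. Then the unique minimizer is given by λ_k* = λ·μ_k / (∑_{l=1}^K μ_l) for each k; in particular, all queues have the same offered load λ_k*/μ_k = λ/∑_{l=1}^K μ_l. -/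
noncomputable def SS (q : ℕ → ℝ) (t : ℕ) : ℝ := ∑ k ∈ Finset.range (t+1), q k

lemma SS_pos {q : ℕ → ℝ} (hpos : ∀ i, 0 < q i) (t : ℕ) : 0 < SS q t :=
  Finset.sum_pos (fun i _ => hpos i) (by simp)

lemma ratio_step {q : ℕ → ℝ} (hpos : ∀ i, 0 < q i)
    (hlc : ∀ i, q i * q (i+2) ≤ q (i+1)^2) :
    ∀ i k, i ≤ k → q (k+1) * q i ≤ q (i+1) * q k := by
  intro i k hik
  induction k, hik using Nat.le_induction with
  | base => ring_nf; exact le_rfl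
  | succ k hik IH =>
    have h1 := hlc k
    have h2 := hpos i
    have h3 := hpos k
    have h4 := hpos (k+1)
    have h5 := hpos (i+1)
    nlinarith [mul_le_mul_of_nonneg_left IH h4.le]

lemma spread {q : ℕ → ℝ} (hpos : ∀ i, 0 < q i)
    (hlc : ∀ i, q i * q (i+2) ≤ q (i+1)^2) :
    ∀ d a b, d ≤ a → a ≤ b → q (a - d) * q (b + d) ≤ q a * q b := by
  intro d
  induction d with
  | zero => intro a b _ _; simp
  | succ d IH =>
    intro a b hd hab
    have hd' : d ≤ a := by omega
    have key : q (b + d + 1) * q (a - (d+1)) ≤ q (a - (d+1) + 1) * q (b + d) :=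
      ratio_step hpos hlc _ _ (by omega)
    have e1 : a - (d+1) + 1 = a - d := by omega
    have e2 : b + (d+1) = b + d + 1 := by omega
    rw [e1] at key
    rw [e2]
    calc q (a - (d+1)) * q (b + d + 1) = q (b + d + 1) * q (a - (d+1)) := by ring
    _ ≤ q (a - d) * q (b + d) := key
    _ ≤ q a * q b := IH a b hd' hab

lemma spread' {q : ℕ → ℝ} (hpos : ∀ i, 0 < q i)
    (hlc : ∀ i, q i * q (i+2) ≤ q (i+1)^2)
    {i j a b : ℕ} (hia : i ≤ a) (haj : a ≤ j) (hsum : a + b = i + j) :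
    q i * q j ≤ q a * q b := by
  rcases le_total a b with h | h
  · have := spread hpos hlc (a - i) a b (by omega) h
    have e1 : a - (a - i) = i := by omega
    have e2 : b + (a - i) = j := by omega
    rwa [e1, e2] at this
  · have hib : i ≤ b := by omega
    have := spread hpos hlc (b - i) b a (by omega) h
    have e1 : b - (b - i) = i := by omega
    have e2 : a + (b - i) = j := by omega
    rw [e1, e2] at this
    linarith [this]

lemma SS_lc {q : ℕ → ℝ} (hpos : ∀ i, 0 < q i)
    (hlc : ∀ i, q i * q (i+2) ≤ q (i+1)^2) :
    ∀ t, SS q t * SS q (t+2) ≤ SS q (t+1)^2 := by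
  intro t
  have key : SS q t * q (t+2) ≤ SS q (t+1) * q (t+1) := by
    have h1 : SS q t * q (t+2) = ∑ k ∈ Finset.range (t+1), q k * q (t+2) := by
      rw [SS, Finset.sum_mul]
    have h2 : ∑ k ∈ Finset.range (t+1), q k * q (t+2)
        ≤ ∑ k ∈ Finset.range (t+1), q (k+1) * q (t+1) := by
      apply Finset.sum_le_sum
      intro k hk
      have hk' := Finset.mem_range.mp hk
      have := ratio_step hpos hlc k (t+1) (by omega)
      linarith [this]
    have h3 : SS q (t+1) * q (t+1) = ∑ k ∈ Finset.range (t+2), q k * q (t+1) := by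
      rw [SS, Finset.sum_mul]
    have h4 : ∑ k ∈ Finset.range (t+2), q k * q (t+1)
        = (∑ k ∈ Finset.range (t+1), q (k+1) * q (t+1)) + q 0 * q (t+1) := by
      rw [Finset.sum_range_succ' (fun k => q k * q (t+1)) (t+1)]
    have h5 : 0 < q 0 * q (t+1) := mul_pos (hpos 0) (hpos (t+1))
    linarith
  have e1 : SS q (t+1) = SS q t + q (t+1) := by rw [SS, SS, Finset.sum_range_succ]
  have e2 : SS q (t+2) = SS q (t+1) + q (t+2) := by rw [SS, SS, Finset.sum_range_succ]
  nlinarith [SS_pos hpos t, SS_pos hpos (t+1), hpos (t+1), hpos (t+2)]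

lemma keyineq {q : ℕ → ℝ} (hpos : ∀ i, 0 < q i)
    (hlc : ∀ i, q i * q (i+2) ≤ q (i+1)^2) (n : ℕ) (hn : 1 ≤ n) :
    SS q n * (∑ a ∈ Finset.range n, ∑ t ∈ Finset.range a, SS q t)
      < (∑ t ∈ Finset.range n, SS q t)^2 := by
  have hSpos : ∀ t, 0 < SS q t := SS_pos hpos
  have hSlc : ∀ t, SS q t * SS q (t+2) ≤ SS q (t+1)^2 := SS_lc hpos hlc
  have inner : ∀ a ∈ Finset.range n,
      ∑ t ∈ Finset.range a, SS q n * SS q t ≤ ∑ b ∈ Finset.range n, SS q a * SS q b := by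
    intro a ha
    have ha' := Finset.mem_range.mp ha
    have step1 : ∑ t ∈ Finset.range a, SS q n * SS q t
        ≤ ∑ t ∈ Finset.range a, SS q a * SS q (n - a + t) := by
      apply Finset.sum_le_sum
      intro t ht
      have ht' := Finset.mem_range.mp ht
      have : SS q t * SS q n ≤ SS q a * SS q (n - a + t) :=
        spread' hSpos hSlc (by omega) (by omega) (by omega)
      linarith
    have step2 : ∑ t ∈ Finset.range a, SS q a * SS q (n - a + t)
        = ∑ b ∈ Finset.Ico (n - a) n, SS q a * SS q b := by
      rw [Finset.sum_Ico_eq_sum_range, show n - (n-a) = a from by omega]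
    have step3 : ∑ b ∈ Finset.Ico (n - a) n, SS q a * SS q b
        ≤ ∑ b ∈ Finset.range n, SS q a * SS q b := by
      apply Finset.sum_le_sum_of_subset_of_nonneg
      · intro b hb
        simp only [Finset.mem_Ico] at hb
        exact Finset.mem_range.mpr hb.2
      · intro b _ _
        exact (mul_pos (hSpos a) (hSpos b)).le
    linarith
  have strict : ∃ a ∈ Finset.range n,
      ∑ t ∈ Finset.range a, SS q n * SS q t < ∑ b ∈ Finset.range n, SS q a * SS q b := by
    refine ⟨0, Finset.mem_range.mpr hn, ?_⟩
    simp only [Finset.range_zero, Finset.sum_empty]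
    exact Finset.sum_pos (fun b _ => mul_pos (hSpos 0) (hSpos b)) ⟨0, Finset.mem_range.mpr hn⟩
  have main : ∑ a ∈ Finset.range n, ∑ t ∈ Finset.range a, SS q n * SS q t
      < ∑ a ∈ Finset.range n, ∑ b ∈ Finset.range n, SS q a * SS q b :=
    Finset.sum_lt_sum inner strict
  have lhs_eq : SS q n * (∑ a ∈ Finset.range n, ∑ t ∈ Finset.range a, SS q t)
      = ∑ a ∈ Finset.range n, ∑ t ∈ Finset.range a, SS q n * SS q t := by
    rw [Finset.mul_sum]
    exact Finset.sum_congr rfl fun a _ => Finset.mul_sum _ _ _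
  have rhs_eq : (∑ t ∈ Finset.range n, SS q t)^2
      = ∑ a ∈ Finset.range n, ∑ b ∈ Finset.range n, SS q a * SS q b := by
    rw [sq, Finset.sum_mul_sum]
  rw [lhs_eq, rhs_eq]
  exact main

lemma count_id (q : ℕ → ℝ) (n : ℕ) :
    ∑ a ∈ Finset.range n, ∑ t ∈ Finset.range a, SS q t
      = ∑ t ∈ Finset.range n, ((n:ℝ) - 1 - t) * SS q t := by
  induction n with
  | zero => simp
  | succ n IH =>
    rw [Finset.sum_range_succ, IH, Finset.sum_range_succ]
    push_cast
    rw [show ((n:ℝ) + 1 - 1 - n) * SS q n = 0 by ring, add_zero]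
    rw [← Finset.sum_add_distrib]
    apply Finset.sum_congr rfl
    intro t _
    ring

lemma abelB (q : ℕ → ℝ) (n : ℕ) :
    ∑ j ∈ Finset.range (n+1), (j:ℝ) * q j
      = (n:ℝ) * SS q n - ∑ t ∈ Finset.range n, SS q t := by
  induction n with
  | zero => simp
  | succ n IH =>
    rw [Finset.sum_range_succ, IH, Finset.sum_range_succ,
      show SS q (n+1) = SS q n + q (n+1) from by rw [SS, SS, Finset.sum_range_succ]]
    push_cast
    ring

lemma abelC (q : ℕ → ℝ) (n : ℕ) :
    ∑ j ∈ Finset.range (n+1), (j:ℝ) * ((j:ℝ) - 1) * q j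
      = (n:ℝ) * ((n:ℝ) - 1) * SS q n - 2 * ∑ t ∈ Finset.range n, (t:ℝ) * SS q t := by
  induction n with
  | zero => simp
  | succ n IH =>
    rw [Finset.sum_range_succ, IH, Finset.sum_range_succ,
      show SS q (n+1) = SS q n + q (n+1) from by rw [SS, SS, Finset.sum_range_succ]]
    push_cast
    ring

lemma Fpos {q : ℕ → ℝ} (hpos : ∀ i, 0 < q i) (hlc : ∀ i, q i * q (i+2) ≤ q (i+1)^2)
    (n : ℕ) (hn : 1 ≤ n) :
    0 < (n:ℝ) * ((n:ℝ)+1) * (SS q n)^2 + 2 * (∑ j ∈ Finset.range (n+1), (j:ℝ) * q j)^2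
      - 2 * ((n:ℝ)+1) * SS q n * (∑ j ∈ Finset.range (n+1), (j:ℝ) * q j)
      - SS q n * (∑ j ∈ Finset.range (n+1), (j:ℝ) * ((j:ℝ) - 1) * q j) := by
  have hW : ∑ t ∈ Finset.range n, ((n:ℝ) - 1 - t) * SS q t
      = ((n:ℝ) - 1) * (∑ t ∈ Finset.range n, SS q t) - ∑ t ∈ Finset.range n, (t:ℝ) * SS q t := by
    rw [Finset.mul_sum, ← Finset.sum_sub_distrib]
    exact Finset.sum_congr rfl fun t _ => by ring
  have hkey := keyineq hpos hlc n hn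
  rw [count_id, hW] at hkey
  rw [abelB, abelC]
  nlinarith [hkey]
noncomputable def ccc (m j : ℕ) : ℝ :=
  if j ≤ m then ((Nat.factorial j : ℝ))⁻¹ else ((Nat.factorial m : ℝ) * (m:ℝ)^(j-m))⁻¹

lemma ccc_pos {m : ℕ} (hm : 1 ≤ m) (j : ℕ) : 0 < ccc m j := by
  rw [ccc]
  split
  · positivity
  · have : (0:ℝ) < (m:ℝ) := by exact_mod_cast hm
    positivity

noncomputable def rr (m j : ℕ) : ℝ := if j < m then ((j:ℝ)+1)⁻¹ else ((m:ℝ))⁻¹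

lemma rr_pos {m : ℕ} (hm : 1 ≤ m) (j : ℕ) : 0 < rr m j := by
  rw [rr]
  split
  · positivity
  · have : (0:ℝ) < (m:ℝ) := by exact_mod_cast hm
    positivity

lemma rr_anti {m : ℕ} (hm : 1 ≤ m) (j : ℕ) : rr m (j+1) ≤ rr m j := by
  rw [rr, rr]
  rcases lt_or_ge (j+1) m with h1 | h1
  · rw [if_pos h1, if_pos (by omega)]
    apply inv_anti₀
    · positivity
    · push_cast; linarith
  · rcases lt_or_ge j m with h2 | h2
    · rw [if_neg (by omega), if_pos h2]
      have : j + 1 = m := by omega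
      subst this
      push_cast
      simp
    · rw [if_neg (by omega), if_neg (by omega)]

lemma ccc_succ {m : ℕ} (hm : 1 ≤ m) (j : ℕ) : ccc m (j+1) = ccc m j * rr m j := by
  rw [ccc, ccc, rr]
  rcases le_or_gt (j+1) m with h1 | h1
  · rw [if_pos h1, if_pos (by omega : j ≤ m), if_pos (by omega : j < m)]
    rw [Nat.factorial_succ]
    push_cast
    rw [mul_inv]
    ring
  · rcases le_or_gt j m with h2 | h2
    · have hjm : j = m := by omega
      subst hjm
      rw [if_neg (by omega), if_pos le_rfl, if_neg (by omega)]
      rw [show j + 1 - j = 1 from by omega, pow_one, mul_inv]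
    · rw [if_neg (by omega), if_neg (by omega), if_neg (by omega)]
      rw [show j + 1 - m = (j - m) + 1 from by omega, pow_succ]
      rw [mul_inv, mul_inv, mul_inv]
      ring

lemma ccc_lc {m : ℕ} (hm : 1 ≤ m) (j : ℕ) : ccc m j * ccc m (j+2) ≤ ccc m (j+1)^2 := by
  rw [show j + 2 = (j+1)+1 from rfl, ccc_succ hm (j+1), ccc_succ hm j]
  have h1 := ccc_pos hm j
  have h2 := rr_pos hm j
  have h3 := rr_pos hm (j+1)
  have h4 := rr_anti hm j
  nlinarith

lemma qpos {m : ℕ} (hm : 1 ≤ m) {x : ℝ} (hx : 0 < x) (j : ℕ) : 0 < ccc m j * x ^ j :=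
  mul_pos (ccc_pos hm j) (pow_pos hx j)

lemma qlc {m : ℕ} (hm : 1 ≤ m) (x : ℝ) (j : ℕ) :
    (ccc m j * x ^ j) * (ccc m (j+2) * x ^ (j+2)) ≤ (ccc m (j+1) * x ^ (j+1))^2 := by
  have h := ccc_lc hm j
  have e : x ^ j * x ^ (j+2) = (x^(j+1))^2 := by ring
  have hx2 : (0:ℝ) ≤ (x^(j+1))^2 := sq_nonneg _
  calc (ccc m j * x ^ j) * (ccc m (j+2) * x ^ (j+2))
      = (ccc m j * ccc m (j+2)) * (x^(j+1))^2 := by rw [← e]; ring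
  _ ≤ ccc m (j+1)^2 * (x^(j+1))^2 := mul_le_mul_of_nonneg_right h hx2
  _ = (ccc m (j+1) * x ^ (j+1))^2 := by ring

lemma aCoef_eq {m : ℕ} (j : ℕ) (r : ℝ) : aCoef m j r = ccc m j * r ^ j := by
  rw [aCoef, ccc]
  split
  · rw [div_eq_mul_inv, mul_comm]
  · rename_i h
    rw [div_pow, div_mul_div_comm, ← pow_add, show m + (j - m) = j from by omega,
      div_eq_mul_inv, mul_comm]
noncomputable def Sf (m n : ℕ) (x : ℝ) : ℝ := ∑ j ∈ Finset.range (n+1), ccc m j * x ^ j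

noncomputable def Df1 (m n : ℕ) (x : ℝ) : ℝ :=
  ∑ j ∈ Finset.range (n+1), ccc m j * ((j:ℝ) * x ^ (j-1))

noncomputable def Df2 (m n : ℕ) (x : ℝ) : ℝ :=
  ∑ j ∈ Finset.range (n+1), ccc m j * ((j:ℝ) * (((j-1:ℕ):ℝ) * x ^ (j-1-1)))

lemma Sf_pos {m : ℕ} (hm : 1 ≤ m) (n : ℕ) {x : ℝ} (hx : 0 ≤ x) : 0 < Sf m n x := by
  rw [Sf]
  apply Finset.sum_pos'
  · intro j _
    have := ccc_pos hm j
    positivity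
  · refine ⟨0, by simp, ?_⟩
    simpa using ccc_pos hm 0

lemma Sf_hasDeriv (m n : ℕ) (x : ℝ) : HasDerivAt (Sf m n) (Df1 m n x) x := by
  apply HasDerivAt.fun_sum
  intro j _
  exact (hasDerivAt_pow j x).const_mul (ccc m j)

lemma Df1_hasDeriv (m n : ℕ) (x : ℝ) : HasDerivAt (Df1 m n) (Df2 m n x) x := by
  apply HasDerivAt.fun_sum
  intro j _
  exact ((hasDerivAt_pow (j-1) x).const_mul ((j:ℝ))).const_mul (ccc m j)

lemma xDf1 (m n : ℕ) (x : ℝ) :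
    x * Df1 m n x = ∑ j ∈ Finset.range (n+1), (j:ℝ) * (ccc m j * x ^ j) := by
  rw [Df1, Finset.mul_sum]
  apply Finset.sum_congr rfl
  intro j _
  match j with
  | 0 => simp
  | (j+1) =>
    push_cast
    ring

lemma x2Df2 (m n : ℕ) (x : ℝ) :
    x^2 * Df2 m n x = ∑ j ∈ Finset.range (n+1), (j:ℝ) * ((j:ℝ) - 1) * (ccc m j * x ^ j) := by
  rw [Df2, Finset.mul_sum]
  apply Finset.sum_congr rfl
  intro j _
  match j with
  | 0 => simp
  | 1 => push_cast; simp
  | (j+2) =>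
    push_cast
    ring

lemma Sf_eq_SS (m n : ℕ) (x : ℝ) : Sf m n x = SS (fun j => ccc m j * x ^ j) n := rfl
noncomputable def gg (m n : ℕ) (x : ℝ) : ℝ := ccc m n * x^(n+1) / Sf m n x

lemma gg_strictConvex {m n : ℕ} (hm : 1 ≤ m) (hn : 1 ≤ n) :
    StrictConvexOn ℝ (Set.Ici 0) (gg m n) := by
  have hSc : Continuous (Sf m n) := by
    unfold Sf
    exact continuous_finset_sum _ (fun j _ => by fun_prop)
  apply strictConvexOn_of_deriv2_pos (convex_Ici 0)
  · exact ContinuousOn.div (by fun_prop) hSc.continuousOn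
      (fun x hx => (Sf_pos hm n hx).ne')
  · intro x hx
    rw [interior_Ici] at hx
    obtain ⟨N, rfl⟩ : ∃ N, n = N + 1 := ⟨n - 1, by omega⟩
    have hxpos : (0:ℝ) < x := hx
    set c := ccc m (N+1) with hc_def
    have hcpos : 0 < c := ccc_pos hm (N+1)
    -- first derivative
    set g1 : ℝ → ℝ := fun y =>
      (c * (((N+2:ℕ):ℝ) * y^(N+2-1)) * Sf m (N+1) y - c * y^(N+2) * Df1 m (N+1) y) /
        (Sf m (N+1) y)^2 with hg1_def
    have hg1 : ∀ y ∈ Set.Ioi (0:ℝ), HasDerivAt (gg m (N+1)) (g1 y) y := by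
      intro y hy
      have hne : Sf m (N+1) y ≠ 0 := (Sf_pos hm (N+1) (le_of_lt hy)).ne'
      exact ((hasDerivAt_pow (N+2) y).const_mul c).div (Sf_hasDeriv m (N+1) y) hne
    have hSpos : 0 < Sf m (N+1) x := Sf_pos hm (N+1) hxpos.le
    have hne : Sf m (N+1) x ≠ 0 := hSpos.ne'
    -- second derivative
    have hP : HasDerivAt
        (fun y => c * (((N+2:ℕ):ℝ) * y^(N+2-1)) * Sf m (N+1) y - c * y^(N+2) * Df1 m (N+1) y)
        ((c * (((N+2:ℕ):ℝ) * (((N+2-1:ℕ):ℝ) * x^(N+2-1-1))) * Sf m (N+1) x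
          + c * (((N+2:ℕ):ℝ) * x^(N+2-1)) * Df1 m (N+1) x)
         - (c * (((N+2:ℕ):ℝ) * x^(N+2-1)) * Df1 m (N+1) x + c * x^(N+2) * Df2 m (N+1) x)) x := by
      apply HasDerivAt.sub
      · exact (((hasDerivAt_pow (N+2-1) x).const_mul ((N+2:ℕ):ℝ)).const_mul c).mul
          (Sf_hasDeriv m (N+1) x)
      · exact ((hasDerivAt_pow (N+2) x).const_mul c).mul (Df1_hasDeriv m (N+1) x)
    have hQ : HasDerivAt (fun y => (Sf m (N+1) y)^2)
        ((2:ℕ) * Sf m (N+1) x ^ (2-1) * Df1 m (N+1) x) x :=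
      (Sf_hasDeriv m (N+1) x).pow 2
    have hg1' : HasDerivAt g1 _ x := hP.div hQ (pow_ne_zero 2 hne)
    have hev : deriv (gg m (N+1)) =ᶠ[nhds x] g1 :=
      Filter.eventually_of_mem (Ioi_mem_nhds hxpos) (fun y hy => (hg1 y hy).deriv)
    have hiter : deriv^[2] (gg m (N+1)) x = deriv g1 x := by
      simp only [Function.iterate_succ, Function.iterate_zero, Function.comp, id]
      exact Filter.EventuallyEq.deriv_eq hev
    rw [hiter, hg1'.deriv]
    have hF : 0 < ((N+1:ℕ):ℝ) * (((N+1:ℕ):ℝ)+1) * (Sf m (N+1) x)^2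
        + 2*(x * Df1 m (N+1) x)^2
        - 2*(((N+1:ℕ):ℝ)+1) * Sf m (N+1) x * (x * Df1 m (N+1) x)
        - Sf m (N+1) x * (x^2 * Df2 m (N+1) x) := by
      have h := Fpos (q := fun j => ccc m j * x ^ j) (fun j => qpos hm hxpos j)
        (fun j => qlc hm x j) (N+1) (by omega)
      rw [xDf1, x2Df2, Sf_eq_SS]
      exact h
    apply div_pos
    · simp only [show N + 2 - 1 = N + 1 from rfl, show N + 1 - 1 = N from rfl,
        show 2 - 1 = 1 from rfl]
      push_cast
      push_cast at hF
      have key : (c * (((N:ℝ) + 2) * (((N:ℝ) + 1) * x ^ N)) * Sf m (N + 1) x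
            + c * (((N:ℝ) + 2) * x ^ (N + 1)) * Df1 m (N + 1) x -
            (c * (((N:ℝ) + 2) * x ^ (N + 1)) * Df1 m (N + 1) x
              + c * x ^ (N + 2) * Df2 m (N + 1) x)) * Sf m (N + 1) x ^ 2 -
          (c * (((N:ℝ) + 2) * x ^ (N + 1)) * Sf m (N + 1) x
            - c * x ^ (N + 2) * Df1 m (N + 1) x) *
            (2 * Sf m (N + 1) x ^ 1 * Df1 m (N + 1) x)
          = Sf m (N+1) x * (c * x^N * (((N:ℝ) + 1) * ((N:ℝ) + 1 + 1) * Sf m (N + 1) x ^ 2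
              + 2 * (x * Df1 m (N + 1) x) ^ 2 -
              2 * ((N:ℝ) + 1 + 1) * Sf m (N + 1) x * (x * Df1 m (N + 1) x) -
              Sf m (N + 1) x * (x ^ 2 * Df2 m (N + 1) x))) := by ring
      rw [key]
      exact mul_pos hSpos (mul_pos (mul_pos hcpos (pow_pos hxpos N)) hF)
    · exact pow_pos (pow_pos hSpos 2) 2
lemma gg_eq_mul_Bmn (m n : ℕ) (r : ℝ) : r * Bmn m n r = gg m n r := by
  rw [Bmn, gg, aCoef_eq,
    show (∑ j ∈ Finset.range (n+1), aCoef m j r) = Sf m n r from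
      Finset.sum_congr rfl fun j _ => aCoef_eq j r,
    mul_div_assoc']
  congr 1
  ring

/-- with equal buffer and server-pool sizes, the OBS equalizes offered loads. -/
theorem stmt_12 (K : ℕ) (hK : 1 ≤ K) (lam : ℝ) (hlam : 0 < lam)
    (m n : ℕ) (hm : 1 ≤ m) (hn : m ≤ n) (μ : Fin K → ℝ) (hμ : ∀ k, 0 < μ k)
    (φ : Fin K → ℝ → ℝ) (hφ0 : ∀ k, φ k 0 = 0)
    (hφ : ∀ k, ∀ t : ℝ, 0 < t → φ k t = t * Bmn m n (t / μ k))
    (v : Fin K → ℝ) (hv : ∀ k, v k = lam * μ k / ∑ l, μ l) :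
    (((∀ k, v k ∈ Set.Icc (0 : ℝ) lam) ∧ ∑ k, v k = lam) ∧
      ∀ w : Fin K → ℝ, ((∀ k, w k ∈ Set.Icc (0 : ℝ) lam) ∧ ∑ k, w k = lam) →
        ∑ k, φ k (v k) ≤ ∑ k, φ k (w k)) ∧
    (∀ w : Fin K → ℝ, ((∀ k, w k ∈ Set.Icc (0 : ℝ) lam) ∧ ∑ k, w k = lam) →
      (∀ u : Fin K → ℝ, ((∀ k, u k ∈ Set.Icc (0 : ℝ) lam) ∧ ∑ k, u k = lam) →
        ∑ k, φ k (w k) ≤ ∑ k, φ k (u k)) → w = v) ∧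
    (∀ k, v k / μ k = lam / ∑ l, μ l) := by
  have hn1 : 1 ≤ n := le_trans hm hn
  have hKne : Nonempty (Fin K) := ⟨⟨0, hK⟩⟩
  set T := ∑ l, μ l with hT
  have hTpos : 0 < T := Finset.sum_pos (fun l _ => hμ l) Finset.univ_nonempty
  have hμT : ∀ k, μ k ≤ T := fun k =>
    Finset.single_le_sum (f := μ) (fun l _ => (hμ l).le) (Finset.mem_univ k)
  have hφg : ∀ k, ∀ t : ℝ, 0 ≤ t → φ k t = μ k * gg m n (t / μ k) := by
    intro k t ht
    rcases eq_or_lt_of_le ht with h0 | h0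
    · rw [← h0, hφ0]
      rw [zero_div, gg]
      rw [zero_pow (by omega : n + 1 ≠ 0)]
      simp
    · rw [hφ k t h0, ← gg_eq_mul_Bmn, ← mul_assoc,
        show μ k * (t / μ k) = t from by rw [mul_comm, div_mul_cancel₀ t (hμ k).ne']]
  have hvk : ∀ k, v k / μ k = lam / T := by
    intro k
    rw [hv k]
    rw [div_div, mul_comm T (μ k), ← div_div, mul_div_assoc, div_self (hμ k).ne', mul_one]
  have hv_mem : ∀ k, v k ∈ Set.Icc (0 : ℝ) lam := by
    intro k
    constructor
    · rw [hv k]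
      exact div_nonneg (mul_nonneg hlam.le (hμ k).le) hTpos.le
    · rw [hv k, div_le_iff₀ hTpos]
      exact mul_le_mul_of_nonneg_left (hμT k) hlam.le
  have hv_sum : ∑ k, v k = lam := by
    rw [Finset.sum_congr rfl (fun k _ => hv k), ← Finset.sum_div, ← Finset.mul_sum, ← hT,
      mul_div_assoc, div_self hTpos.ne', mul_one]
  have hv_val : ∑ k, φ k (v k) = T * gg m n (lam / T) := by
    calc ∑ k, φ k (v k) = ∑ k, μ k * gg m n (lam / T) :=
        Finset.sum_congr rfl fun k _ => by rw [hφg k (v k) (hv_mem k).1, hvk k]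
    _ = T * gg m n (lam / T) := by rw [← Finset.sum_mul]
  have key : ∀ w : Fin K → ℝ, (∀ k, w k ∈ Set.Icc (0:ℝ) lam) → (∑ k, w k) = lam →
      (T * gg m n (lam / T) ≤ ∑ k, φ k (w k)) ∧
      ((∑ k, φ k (w k) ≤ T * gg m n (lam / T)) → w = v) := by
    intro w hw1 hw2
    set p : Fin K → ℝ := fun k => w k / μ k with hp
    have hmem : ∀ k ∈ Finset.univ (α := Fin K), p k ∈ Set.Ici (0:ℝ) :=
      fun k _ => div_nonneg (hw1 k).1 (hμ k).le
    have hw0 : ∀ k ∈ Finset.univ (α := Fin K), (0:ℝ) < μ k / T :=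
      fun k _ => div_pos (hμ k) hTpos
    have hwsum1 : ∑ k, μ k / T = 1 := by
      rw [← Finset.sum_div, ← hT, div_self hTpos.ne']
    have hcenter : ∑ k, (μ k / T) • p k = lam / T := by
      simp only [smul_eq_mul]
      calc ∑ k, μ k / T * p k = ∑ k, w k / T := by
            apply Finset.sum_congr rfl
            intro k _
            rw [hp]
            have := (hμ k).ne'
            field_simp
      _ = lam / T := by rw [← Finset.sum_div, hw2]
    have hjen := (gg_strictConvex hm hn1).convexOn.map_sum_le
      (fun k hk => (hw0 k hk).le) hwsum1 hmem
    rw [hcenter] at hjen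
    have hφw : ∑ k, φ k (w k) = ∑ k, μ k * gg m n (p k) :=
      Finset.sum_congr rfl fun k _ => hφg k (w k) (hw1 k).1
    have hexp : ∑ k, (μ k / T) • gg m n (p k) = (∑ k, μ k * gg m n (p k)) / T := by
      simp only [smul_eq_mul]
      exact (Finset.sum_congr rfl fun k _ => by rw [div_mul_eq_mul_div]).trans
        (Finset.sum_div _ _ _).symm
    constructor
    · rw [hφw]
      rw [hexp] at hjen
      have := mul_le_mul_of_nonneg_left hjen hTpos.le
      calc T * gg m n (lam / T) ≤ T * ((∑ k, μ k * gg m n (p k)) / T) := this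
      _ = ∑ k, μ k * gg m n (p k) := by field_simp
    · intro hle
      have hle' : ∑ k, (μ k / T) • gg m n (p k) ≤ gg m n (∑ k, (μ k / T) • p k) := by
        rw [hcenter, hexp]
        rw [hφw] at hle
        rw [div_le_iff₀ hTpos, mul_comm]
        exact hle
      have hall := (gg_strictConvex hm hn1).eq_of_le_map_sum hw0 hwsum1 hmem hle'
      funext k
      have hpk : ∀ j, p j = p k := fun j => hall (Finset.mem_univ j) (Finset.mem_univ k)
      have hwj : ∀ j, w j = μ j * p j := by
        intro j
        rw [hp]
        have := (hμ j).ne'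
        field_simp
      have hsum' : lam = T * p k := by
        rw [← hw2]
        calc ∑ j, w j = ∑ j, μ j * p k :=
            Finset.sum_congr rfl fun j _ => by rw [hwj j, hpk j]
        _ = T * p k := by rw [← Finset.sum_mul, ← hT]
      rw [hv k, hwj k, hpk k, hsum']
      have := hTpos.ne'
      field_simp
  refine ⟨⟨⟨hv_mem, hv_sum⟩, ?_⟩, ?_, hvk⟩
  · intro w hw
    rw [hv_val]
    exact (key w hw.1 hw.2).1
  · intro w hw hmin
    apply (key w hw.1 hw.2).2
    have h2 := hmin v ⟨hv_mem, hv_sum⟩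
    rwa [hv_val] at h2
end

section
/- Let K ≥ 1 be an integer, λ > 0 a real, m ≥ 1 and n > m integers, and μ_1,…,μ_K > 0 reals. Let (λ_1*,…,λ_K*) be the unique minimizer of ∑_{k=1}^K φ_k(λ_k) over vectors with λ_k ∈ [0,λ] and ∑_k λ_k = λ, where φ_k(0) = 0 and φ_k(t) = t·B_{m,n}(t/μ_k) for t > 0, and set r_k* = λ_k*/μ_k, ρ_k* = r_k*/m. Then for every integer x with 0 ≤ x < n and all k, l ∈ {1,…,K}, the PI routing indices coincide: θ_k^{PI}(x) = θ_l^{PI}(x). In particular, the PI index policy reduces to the shortest-queue routing rule. -/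
open Classical in
/-- PI routing index `θ_k^{PI}(x)` for a queue with `m` servers, buffer size `n`,
and offered load `r`. -/
noncomputable def piIndex (m n : ℕ) (r : ℝ) (x : ℕ) : ℝ :=
  if x ≤ m then Bmn m n r / erlangB x r
  else if r / (m : ℝ) = 1 then Bmn m n r * ((x : ℝ) - (m : ℝ) + 1 / erlangB m r)
  else Bmn m n r *
      (1 - r / (m : ℝ) + (r / (m : ℝ)) * (1 - (r / (m : ℝ)) ^ (x - m)) * erlangB m r) /
    ((r / (m : ℝ)) ^ (x - m) * (1 - r / (m : ℝ)) * erlangB m r)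



namespace S13

/-- partial sum weight -/
noncomputable def alf (N s j : ℕ) : ℝ :=
  ((2*(N:ℝ)+2-(s:ℝ))*(2*(N:ℝ)-(s:ℝ)))/4 - (3/4)*(2*(j:ℝ)-(s:ℝ))^2

lemma sum_id (u : ℕ) : ∑ j ∈ Finset.range (u+1), (j:ℝ) = (u:ℝ)*((u:ℝ)+1)/2 := by
  induction u with
  | zero => simp
  | succ u ih => rw [Finset.sum_range_succ, ih]; push_cast; ring

lemma sum_sq (u : ℕ) : ∑ j ∈ Finset.range (u+1), (j:ℝ)^2 = (u:ℝ)*((u:ℝ)+1)*(2*(u:ℝ)+1)/6 := by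
  induction u with
  | zero => simp
  | succ u ih => rw [Finset.sum_range_succ, ih]; push_cast; ring

lemma sum_shift_sq (u : ℕ) :
    ∑ i ∈ Finset.range (u+1), (2*(i:ℝ)-(u:ℝ))^2 = (u:ℝ)*((u:ℝ)+1)*((u:ℝ)+2)/3 := by
  have h : ∀ i : ℕ, (2*(i:ℝ)-(u:ℝ))^2 = 4*(i:ℝ)^2 - 4*(u:ℝ)*(i:ℝ) + (u:ℝ)^2 := by
    intro i; ring
  simp only [h]
  rw [Finset.sum_add_distrib, Finset.sum_sub_distrib, ← Finset.mul_sum,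
    ← Finset.mul_sum, sum_id, sum_sq, Finset.sum_const, Finset.card_range,
    nsmul_eq_mul]
  push_cast; ring

/-- partial sums of the quadratic weights are nonnegative -/
lemma alf_partial (N lo hi s : ℕ) (hsum : lo + hi = s) (hhi : hi ≤ N) :
    0 ≤ ∑ j ∈ Finset.Icc lo hi, alf N s j := by
  rcases le_or_gt lo hi with hle | hlt
  · obtain ⟨u, rfl⟩ : ∃ u, hi = lo + u := ⟨hi - lo, by omega⟩
    have hrw : ∑ j ∈ Finset.Icc lo (lo+u), alf N s j
        = ∑ i ∈ Finset.range (u + 1), alf N s (lo + i) := by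
      rw [← Finset.Ico_add_one_right_eq_Icc, Finset.sum_Ico_eq_sum_range]
      have h1 : lo + u + 1 - lo = u + 1 := by omega
      rw [h1]
    have hs : (s:ℝ) = 2*(lo:ℝ) + (u:ℝ) := by
      have h2 : s = 2*lo + u := by omega
      rw [h2]; push_cast; ring
    have hterm : ∀ i : ℕ, alf N s (lo + i)
        = ((2*(N:ℝ)+2-(s:ℝ))*(2*(N:ℝ)-(s:ℝ)))/4 - (3/4)*(2*(i:ℝ)-(u:ℝ))^2 := by
      intro i; unfold alf; rw [hs]; push_cast; ring
    rw [hrw]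
    simp only [hterm]
    rw [Finset.sum_sub_distrib, Finset.sum_const, ← Finset.mul_sum, sum_shift_sq,
      Finset.card_range, nsmul_eq_mul]
    have huN : (u:ℝ) ≤ 2*(N:ℝ) - (s:ℝ) := by
      have h3 : u + s ≤ 2*N := by omega
      have := (Nat.cast_le (α := ℝ)).2 h3
      push_cast at this; linarith
    have hu0 : (0:ℝ) ≤ u := Nat.cast_nonneg u
    push_cast
    have hsq : (u:ℝ)*(u:ℝ) ≤ (2*(N:ℝ)-(s:ℝ))*(2*(N:ℝ)-(s:ℝ)) :=
      mul_le_mul huN huN hu0 (le_trans hu0 huN)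
    have h2 : (0:ℝ) ≤ ((u:ℝ)+1) * ((2*(N:ℝ)-(s:ℝ)+2)*(2*(N:ℝ)-(s:ℝ)) - (u:ℝ)*((u:ℝ)+2)) :=
      mul_nonneg (by positivity) (by nlinarith [hu0, huN, hsq])
    nlinarith [h2]
  · rw [Finset.Icc_eq_empty (by omega)]; simp
/-- Abel-type peeling: weighted sum with symmetric unimodal nonnegative weights. -/
lemma peel (N : ℕ) : ∀ (t lo hi s : ℕ) (q : ℕ → ℝ), hi - lo ≤ t → lo + hi = s → hi ≤ N →
    (∀ j, lo ≤ j → j ≤ hi → 0 ≤ q j) →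
    (∀ j, lo ≤ j → j ≤ hi → q (s - j) = q j) →
    (∀ j, lo ≤ j → 2*j + 2 ≤ s → q j ≤ q (j+1)) →
    0 ≤ ∑ j ∈ Finset.Icc lo hi, alf N s j * q j := by
  intro t
  induction t with
  | zero =>
    intro lo hi s q ht hsum hhi hq0 hsym hmono
    rcases lt_or_ge hi lo with h | h
    · rw [Finset.Icc_eq_empty (by omega)]; simp
    · have hlh : lo = hi := by omega
      subst hlh
      rw [Finset.Icc_self, Finset.sum_singleton]
      have hA : 0 ≤ alf N s lo := by
        unfold alf
        have h1 : (s:ℝ) = 2*(lo:ℝ) := by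
          have : s = 2*lo := by omega
          rw [this]; push_cast; ring
        have h2 : (s:ℝ) ≤ 2*(N:ℝ) := by
          have : s ≤ 2*N := by omega
          exact_mod_cast this
        rw [h1] at h2 ⊢
        nlinarith [h2]
      exact mul_nonneg hA (hq0 lo le_rfl le_rfl)
  | succ t ih =>
    intro lo hi s q ht hsum hhi hq0 hsym hmono
    rcases lt_or_ge hi lo with h | h
    · rw [Finset.Icc_eq_empty (by omega)]; simp
    rcases eq_or_lt_of_le h with hlh | hlh
    · subst hlh
      rw [Finset.Icc_self, Finset.sum_singleton]
      have hA : 0 ≤ alf N s lo := by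
        unfold alf
        have h1 : (s:ℝ) = 2*(lo:ℝ) := by
          have : s = 2*lo := by omega
          rw [this]; push_cast; ring
        have h2 : (s:ℝ) ≤ 2*(N:ℝ) := by
          have : s ≤ 2*N := by omega
          exact_mod_cast this
        rw [h1] at h2 ⊢
        nlinarith [h2]
      exact mul_nonneg hA (hq0 lo le_rfl le_rfl)
    -- lo < hi
    · have hqlo : ∀ j, lo ≤ j → j ≤ hi → q lo ≤ q j := by
        have step : ∀ j, lo ≤ j → 2*j ≤ s → q lo ≤ q j := by
          intro j hj
          induction j, hj using Nat.le_induction with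
          | base => intro _; exact le_rfl
          | succ j hj ihj =>
            intro h2j
            exact le_trans (ihj (by omega)) (hmono j hj (by omega))
        intro j hj hj2
        rcases le_or_gt (2*j) s with hc | hc
        · exact step j hj hc
        · have hjs : j ≤ s := by omega
          have h1 : lo ≤ s - j := by omega
          have h2 : 2*(s-j) ≤ s := by omega
          have := step (s-j) h1 h2
          rwa [hsym j hj hj2] at this
      set c := q lo with hc
      have hc0 : 0 ≤ c := hq0 lo le_rfl (le_of_lt hlh)
      have hsplit : ∑ j ∈ Finset.Icc lo hi, alf N s j * q j
          = (∑ j ∈ Finset.Icc lo hi, alf N s j * (q j - c))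
            + c * ∑ j ∈ Finset.Icc lo hi, alf N s j := by
        rw [Finset.mul_sum, ← Finset.sum_add_distrib]
        exact Finset.sum_congr rfl (fun j _ => by ring)
      rw [hsplit]
      have hterm2 : 0 ≤ c * ∑ j ∈ Finset.Icc lo hi, alf N s j :=
        mul_nonneg hc0 (alf_partial N lo hi s hsum hhi)
      have hterm1 : 0 ≤ ∑ j ∈ Finset.Icc lo hi, alf N s j * (q j - c) := by
        have hins : Finset.Icc lo hi
            = insert lo (insert hi (Finset.Icc (lo+1) (hi-1))) := by
          ext j
          simp only [Finset.mem_Icc, Finset.mem_insert]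
          omega
        have hnm1 : lo ∉ insert hi (Finset.Icc (lo+1) (hi-1)) := by
          simp only [Finset.mem_insert, Finset.mem_Icc]; omega
        have hnm2 : hi ∉ Finset.Icc (lo+1) (hi-1) := by
          simp only [Finset.mem_Icc]; omega
        rw [hins, Finset.sum_insert hnm1, Finset.sum_insert hnm2]
        have hz1 : q lo - c = 0 := by rw [hc]; ring
        have hz2 : q hi - c = 0 := by
          have : q (s - lo) = q lo := hsym lo le_rfl (le_of_lt hlh)
          have hsl : s - lo = hi := by omega
          rw [hsl] at this
          rw [this, hc]; ring
        rw [hz1, hz2, mul_zero, mul_zero, zero_add, zero_add]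
        apply ih (lo+1) (hi-1) s (fun j => q j - c) (by omega) (by omega) (by omega)
        · intro j hj1 hj2
          have := hqlo j (by omega) (by omega)
          linarith
        · intro j hj1 hj2
          rw [hsym j (by omega) (by omega)]
        · intro j hj1 hj2
          have := hmono j (by omega) hj2
          linarith
      linarith
/-- the γ coefficient arising from the second derivative -/
noncomputable def gam (N j k : ℕ) : ℝ :=
  (N:ℝ)*((N:ℝ)+1) - (k:ℝ)*((k:ℝ)-1) - 2*((N:ℝ)+1)*(k:ℝ) + 2*(j:ℝ)*(k:ℝ)

lemma gam_symm_alf (N s j : ℕ) (hj : j ≤ s) :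
    gam N j (s-j) + gam N (s-j) j = 2 * alf N s j := by
  have hcast : ((s-j:ℕ):ℝ) = (s:ℝ) - (j:ℝ) := by
    push_cast [Nat.cast_sub hj]; ring
  unfold gam alf
  rw [hcast]; ring

/-- Diagonal inequality: per total-degree sums are nonnegative. -/
lemma diag (N : ℕ) (c : ℕ → ℝ) (hc : ∀ j, 0 < c j)
    (hlc : ∀ j k, j ≤ k → c j * c (k+1) ≤ c (j+1) * c k)
    (s : ℕ) (hs : s ≤ 2*N) :
    0 ≤ ∑ j ∈ Finset.Icc (s-N) (min N s), gam N j (s-j) * (c j * c (s-j)) := by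
  set lo := s - N with hlo
  set hi := min N s with hhi
  set q : ℕ → ℝ := fun j => c j * c (s-j) with hq
  have hself : ∀ j ∈ Finset.Icc lo hi, (s - j) ∈ Finset.Icc lo hi := by
    intro j hj
    simp only [Finset.mem_Icc] at hj ⊢
    omega
  have hrefl : ∑ j ∈ Finset.Icc lo hi, gam N j (s-j) * q j
      = ∑ j ∈ Finset.Icc lo hi, gam N (s-j) j * q j := by
    apply Finset.sum_nbij' (i := fun j => s - j) (j := fun j => s - j) hself hself
    · intro j hj; simp only [Finset.mem_Icc] at hj; omega
    · intro j hj; simp only [Finset.mem_Icc] at hj; omega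
    · intro j hj
      simp only [Finset.mem_Icc] at hj
      have h1 : s - (s - j) = j := by omega
      rw [h1, hq]
      simp only []
      rw [h1]
      ring
  have htwo : (2:ℝ) * ∑ j ∈ Finset.Icc lo hi, gam N j (s-j) * q j
      = 2 * ∑ j ∈ Finset.Icc lo hi, alf N s j * q j := by
    rw [two_mul]
    nth_rewrite 2 [hrefl]
    rw [← Finset.sum_add_distrib, Finset.mul_sum]
    apply Finset.sum_congr rfl
    intro j hj
    simp only [Finset.mem_Icc] at hj
    have hjs : j ≤ s := by omega
    have := gam_symm_alf N s j hjs
    calc gam N j (s-j) * q j + gam N (s-j) j * q j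
        = (gam N j (s-j) + gam N (s-j) j) * q j := by ring
      _ = 2 * (alf N s j * q j) := by rw [this]; ring
  have hpeel : 0 ≤ ∑ j ∈ Finset.Icc lo hi, alf N s j * q j := by
    apply peel N (hi - lo) lo hi s q le_rfl (by omega) (by omega)
    · intro j _ _; exact le_of_lt (mul_pos (hc j) (hc (s-j)))
    · intro j hj1 hj2
      have h1 : s - (s - j) = j := by omega
      rw [hq]; simp only []; rw [h1]; ring
    · intro j hj1 hj2
      rw [hq]; simp only []
      have h2 : j ≤ s - j - 1 := by omega
      have := hlc j (s-j-1) h2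
      have h3 : s - j - 1 + 1 = s - j := by omega
      rw [h3] at this
      have h4 : s - (j+1) = s - j - 1 := by omega
      rw [h4]
      exact this
  linarith [htwo, hpeel]
/-- The full quadratic form is nonnegative. -/
lemma W_nonneg (N : ℕ) (c : ℕ → ℝ) (hc : ∀ j, 0 < c j)
    (hlc : ∀ j k, j ≤ k → c j * c (k+1) ≤ c (j+1) * c k)
    (x : ℝ) (hx : 0 ≤ x) :
    0 ≤ ∑ p ∈ (Finset.range (N+1)) ×ˢ (Finset.range (N+1)),
      c p.1 * c p.2 * gam N p.1 p.2 * x^(p.1+p.2) := by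
  have hmaps : ∀ p ∈ (Finset.range (N+1)) ×ˢ (Finset.range (N+1)),
      p.1 + p.2 ∈ Finset.range (2*N+1) := by
    intro p hp
    simp only [Finset.mem_product, Finset.mem_range] at hp ⊢
    omega
  rw [← Finset.sum_fiberwise_of_maps_to hmaps]
  apply Finset.sum_nonneg
  intro s hs
  simp only [Finset.mem_range] at hs
  have hs2N : s ≤ 2*N := by omega
  have hfac : ∑ p ∈ (Finset.range (N+1) ×ˢ Finset.range (N+1)).filter
        (fun p => p.1 + p.2 = s), c p.1 * c p.2 * gam N p.1 p.2 * x^(p.1+p.2)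
      = (∑ p ∈ (Finset.range (N+1) ×ˢ Finset.range (N+1)).filter
        (fun p => p.1 + p.2 = s), c p.1 * c p.2 * gam N p.1 p.2) * x^s := by
    rw [Finset.sum_mul]
    apply Finset.sum_congr rfl
    intro p hp
    simp only [Finset.mem_filter] at hp
    rw [hp.2]
  rw [hfac]
  apply mul_nonneg _ (pow_nonneg hx s)
  have hbij : ∑ p ∈ (Finset.range (N+1) ×ˢ Finset.range (N+1)).filter
        (fun p => p.1 + p.2 = s), c p.1 * c p.2 * gam N p.1 p.2
      = ∑ j ∈ Finset.Icc (s-N) (min N s), gam N j (s-j) * (c j * c (s-j)) := by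
    apply Finset.sum_nbij' (i := fun p => p.1) (j := fun j => (j, s-j))
    · intro p hp
      simp only [Finset.mem_filter, Finset.mem_product, Finset.mem_range] at hp
      simp only [Finset.mem_Icc]
      omega
    · intro j hj
      simp only [Finset.mem_Icc] at hj
      simp only [Finset.mem_filter, Finset.mem_product, Finset.mem_range]
      omega
    · intro p hp
      simp only [Finset.mem_filter, Finset.mem_product, Finset.mem_range] at hp
      have : s - p.1 = p.2 := by omega
      rw [this]
    · intro j hj; rfl
    · intro p hp
      simp only [Finset.mem_filter, Finset.mem_product, Finset.mem_range] at hp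
      have : s - p.1 = p.2 := by omega
      rw [this]
      ring
  rw [hbij]
  exact diag N c hc hlc s hs2N
/-! ### The function `g(r) = c_N r^{N+1} / Q(r)` and its convexity -/

noncomputable def Qp (N : ℕ) (c : ℕ → ℝ) (r : ℝ) : ℝ := ∑ j ∈ Finset.range (N+1), c j * r^j

noncomputable def Qp1 (N : ℕ) (c : ℕ → ℝ) (r : ℝ) : ℝ :=
  ∑ j ∈ Finset.range (N+1), c j * ((j:ℝ) * r^(j-1))

noncomputable def Qp2 (N : ℕ) (c : ℕ → ℝ) (r : ℝ) : ℝ :=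
  ∑ j ∈ Finset.range (N+1), c j * ((j:ℝ) * ((↑(j-1):ℝ) * r^(j-1-1)))

noncomputable def Pp1 (N : ℕ) (c : ℕ → ℝ) (r : ℝ) : ℝ := c N * (((N:ℝ)+1) * r^N)

noncomputable def Pp2 (N : ℕ) (c : ℕ → ℝ) (r : ℝ) : ℝ := c N * (((N:ℝ)+1) * ((N:ℝ) * r^(N-1)))

noncomputable def gfun (N : ℕ) (c : ℕ → ℝ) (r : ℝ) : ℝ := c N * r^(N+1) / Qp N c r

noncomputable def TTf (N : ℕ) (c : ℕ → ℝ) (x : ℝ) : ℝ :=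
  (Pp2 N c x * Qp N c x - (c N * x^(N+1)) * Qp2 N c x) * Qp N c x
    - 2 * Qp1 N c x * (Pp1 N c x * Qp N c x - (c N * x^(N+1)) * Qp1 N c x)

lemma B1_eq (N : ℕ) (c : ℕ → ℝ) (x : ℝ) :
    x * Qp1 N c x = ∑ j ∈ Finset.range (N+1), c j * (j:ℝ) * x^j := by
  unfold Qp1
  rw [Finset.mul_sum]
  apply Finset.sum_congr rfl
  intro j _
  cases j with
  | zero => simp
  | succ k =>
    have h1 : k + 1 - 1 = k := rfl
    rw [h1, pow_succ]
    push_cast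
    ring

lemma B2_eq (N : ℕ) (c : ℕ → ℝ) (x : ℝ) :
    x^2 * Qp2 N c x = ∑ j ∈ Finset.range (N+1), c j * ((j:ℝ)*((j:ℝ)-1)) * x^j := by
  unfold Qp2
  rw [Finset.mul_sum]
  apply Finset.sum_congr rfl
  intro j _
  match j with
  | 0 => simp
  | 1 => norm_num
  | (k+2) =>
    simp only [Nat.succ_sub_one]
    have h3 : x^(k+2) = x^k * x^2 := by rw [pow_add]
    rw [h3]
    push_cast
    ring

lemma P1_eq (N : ℕ) (c : ℕ → ℝ) (x : ℝ) :
    x * Pp1 N c x = c N * (((N:ℝ)+1)) * x^(N+1) := by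
  unfold Pp1; rw [pow_succ]; ring

lemma P2_eq (N : ℕ) (c : ℕ → ℝ) (x : ℝ) (hN : 1 ≤ N) :
    x^2 * Pp2 N c x = c N * (((N:ℝ)+1)*(N:ℝ)) * x^(N+1) := by
  obtain ⟨M, rfl⟩ : ∃ M, N = M + 1 := ⟨N - 1, by omega⟩
  unfold Pp2
  have h1 : M + 1 - 1 = M := rfl
  rw [h1]
  have h2 : x^(M+1+1) = x^M * x^2 := by rw [← pow_add]
  rw [h2]
  ring

/-- The key polynomial identity. -/
lemma key_identity (N : ℕ) (c : ℕ → ℝ) (x : ℝ) (hN : 1 ≤ N) :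
    x^2 * TTf N c x = c N * x^(N+1) *
      ∑ p ∈ (Finset.range (N+1)) ×ˢ (Finset.range (N+1)),
        c p.1 * c p.2 * gam N p.1 p.2 * x^(p.1+p.2) := by
  have hexp : x^2 * TTf N c x
      = (x^2 * Pp2 N c x) * (Qp N c x * Qp N c x)
        - (c N * x^(N+1)) * (Qp N c x * (x^2 * Qp2 N c x))
        - 2 * (x * Pp1 N c x) * (Qp N c x * (x * Qp1 N c x))
        + 2 * (c N * x^(N+1)) * ((x * Qp1 N c x) * (x * Qp1 N c x)) := by
    unfold TTf; ring
  rw [hexp, P1_eq, P2_eq N c x hN, B1_eq, B2_eq]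
  rw [Finset.sum_product]
  unfold Qp
  rw [Finset.sum_mul_sum, Finset.sum_mul_sum, Finset.sum_mul_sum, Finset.sum_mul_sum]
  simp only [Finset.mul_sum]
  rw [← Finset.sum_sub_distrib, ← Finset.sum_sub_distrib, ← Finset.sum_add_distrib]
  apply Finset.sum_congr rfl
  intro j _
  rw [← Finset.sum_sub_distrib, ← Finset.sum_sub_distrib, ← Finset.sum_add_distrib]
  apply Finset.sum_congr rfl
  intro k _
  unfold gam
  rw [pow_add]
  ring
lemma Qp_pos (N : ℕ) (c : ℕ → ℝ) (hc : ∀ j, 0 < c j) {x : ℝ} (hx : 0 ≤ x) :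
    0 < Qp N c x := by
  unfold Qp
  apply Finset.sum_pos'
  · intro j _
    exact mul_nonneg (hc j).le (pow_nonneg hx j)
  · exact ⟨0, Finset.mem_range.2 (by omega), by simpa using (hc 0)⟩

lemma hasDerivAt_Qp (N : ℕ) (c : ℕ → ℝ) (r : ℝ) :
    HasDerivAt (Qp N c) (Qp1 N c r) r := by
  unfold Qp Qp1
  exact HasDerivAt.fun_sum (fun j _ => (hasDerivAt_pow j r).const_mul (c j))

lemma hasDerivAt_Qp1 (N : ℕ) (c : ℕ → ℝ) (r : ℝ) :
    HasDerivAt (Qp1 N c) (Qp2 N c r) r := by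
  unfold Qp1 Qp2
  exact HasDerivAt.fun_sum
    (fun j _ => (((hasDerivAt_pow (j-1) r)).const_mul ((j:ℝ))).const_mul (c j))

lemma hasDerivAt_Pp (N : ℕ) (c : ℕ → ℝ) (r : ℝ) :
    HasDerivAt (fun y : ℝ => c N * y^(N+1)) (Pp1 N c r) r := by
  have h := (hasDerivAt_pow (N+1) r).const_mul (c N)
  have hv : c N * (((N+1:ℕ):ℝ) * r ^ (N + 1 - 1)) = Pp1 N c r := by
    rw [Nat.add_sub_cancel]; unfold Pp1; push_cast; ring
  exact hv ▸ h

lemma hasDerivAt_Pp1 (N : ℕ) (c : ℕ → ℝ) (r : ℝ) :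
    HasDerivAt (Pp1 N c) (Pp2 N c r) r := by
  unfold Pp1 Pp2
  exact ((hasDerivAt_pow N r).const_mul ((N:ℝ)+1)).const_mul (c N)

noncomputable def g1f (N : ℕ) (c : ℕ → ℝ) (x : ℝ) : ℝ :=
  (Pp1 N c x * Qp N c x - (c N * x^(N+1)) * Qp1 N c x) / Qp N c x ^ 2

noncomputable def g2f (N : ℕ) (c : ℕ → ℝ) (x : ℝ) : ℝ :=
  Qp N c x * TTf N c x / (Qp N c x ^ 2) ^ 2

lemma hasDerivAt_gfun (N : ℕ) (c : ℕ → ℝ) (x : ℝ) (hne : Qp N c x ≠ 0) :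
    HasDerivAt (gfun N c) (g1f N c x) x := by
  unfold gfun g1f
  exact (hasDerivAt_Pp N c x).div (hasDerivAt_Qp N c x) hne

lemma hasDerivAt_g1f (N : ℕ) (c : ℕ → ℝ) (x : ℝ) (hne : Qp N c x ≠ 0) :
    HasDerivAt (g1f N c) (g2f N c x) x := by
  have hnum : HasDerivAt
      (fun y => Pp1 N c y * Qp N c y - (c N * y^(N+1)) * Qp1 N c y)
      ((Pp2 N c x * Qp N c x + Pp1 N c x * Qp1 N c x)
        - (Pp1 N c x * Qp1 N c x + (c N * x^(N+1)) * Qp2 N c x)) x :=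
    ((hasDerivAt_Pp1 N c x).mul (hasDerivAt_Qp N c x)).sub
      ((hasDerivAt_Pp N c x).mul (hasDerivAt_Qp1 N c x))
  have hden : HasDerivAt (fun y => Qp N c y ^ 2)
      (((2:ℕ):ℝ) * Qp N c x ^ (2-1) * Qp1 N c x) x := (hasDerivAt_Qp N c x).pow 2
  have hne2 : Qp N c x ^ 2 ≠ 0 := pow_ne_zero 2 hne
  have h := hnum.div hden hne2
  have hv : (((Pp2 N c x * Qp N c x + Pp1 N c x * Qp1 N c x)
        - (Pp1 N c x * Qp1 N c x + (c N * x^(N+1)) * Qp2 N c x)) * Qp N c x ^ 2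
      - (Pp1 N c x * Qp N c x - (c N * x^(N+1)) * Qp1 N c x)
        * (((2:ℕ):ℝ) * Qp N c x ^ (2-1) * Qp1 N c x)) / (Qp N c x ^ 2) ^ 2
      = g2f N c x := by
    unfold g2f TTf
    norm_num
    ring
  rw [← hv]
  exact h

lemma TTf_nonneg (N : ℕ) (c : ℕ → ℝ) (hN : 1 ≤ N) (hc : ∀ j, 0 < c j)
    (hlc : ∀ j k, j ≤ k → c j * c (k+1) ≤ c (j+1) * c k)
    (x : ℝ) (hx : 0 < x) : 0 ≤ TTf N c x := by
  have hW := W_nonneg N c hc hlc x hx.le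
  have hkey := key_identity N c x hN
  have h1 : 0 ≤ x^2 * TTf N c x := by
    rw [hkey]
    exact mul_nonneg (mul_nonneg (hc N).le (pow_nonneg hx.le _)) hW
  have h2 : TTf N c x = x^2 * TTf N c x / x^2 := by
    field_simp
  rw [h2]
  exact div_nonneg h1 (sq_nonneg x)

theorem gfun_convexOn (N : ℕ) (c : ℕ → ℝ) (hN : 1 ≤ N) (hc : ∀ j, 0 < c j)
    (hlc : ∀ j k, j ≤ k → c j * c (k+1) ≤ c (j+1) * c k) :
    ConvexOn ℝ (Set.Ici 0) (gfun N c) := by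
  apply convexOn_of_hasDerivWithinAt2_nonneg (convex_Ici 0)
    (f' := g1f N c) (f'' := g2f N c)
  · -- continuity
    unfold gfun
    apply ContinuousOn.div
    · exact (continuous_const.mul (continuous_pow _)).continuousOn
    · unfold Qp
      exact (continuous_finset_sum _ fun j _ =>
        continuous_const.mul (continuous_pow j)).continuousOn
    · intro x hx
      exact (Qp_pos N c hc hx).ne'
  · intro x hx
    rw [interior_Ici] at hx
    exact (hasDerivAt_gfun N c x (Qp_pos N c hc (le_of_lt hx)).ne').hasDerivWithinAt
  · intro x hx
    rw [interior_Ici] at hx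
    exact (hasDerivAt_g1f N c x (Qp_pos N c hc (le_of_lt hx)).ne').hasDerivWithinAt
  · intro x hx
    rw [interior_Ici] at hx
    unfold g2f
    apply div_nonneg
    · exact mul_nonneg (Qp_pos N c hc (le_of_lt hx)).le
        (TTf_nonneg N c hN hc hlc x hx)
    · positivity
/-! ### Specialization to the M/M/m/n coefficients -/

noncomputable def bq (m j : ℕ) : ℝ :=
  if j ≤ m then 1/(j.factorial : ℝ) else 1/((m.factorial : ℝ) * (m:ℝ)^(j-m))

lemma bq_pos (m : ℕ) (hm : 1 ≤ m) (j : ℕ) : 0 < bq m j := by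
  unfold bq
  split_ifs with h
  · positivity
  · have hmpos : (0:ℝ) < (m:ℝ) := by exact_mod_cast hm
    positivity

lemma bq_succ (m : ℕ) (hm : 1 ≤ m) (j : ℕ) :
    bq m (j+1) * ((min (j+1) m : ℕ):ℝ) = bq m j := by
  unfold bq
  rcases le_or_gt (j+1) m with h | h
  · rw [if_pos h, if_pos (by omega), min_eq_left h]
    rw [Nat.factorial_succ]
    have h1 : ((j+1:ℕ):ℝ) ≠ 0 := by positivity
    have h2 : ((j.factorial:ℕ):ℝ) ≠ 0 := by positivity
    push_cast
    field_simp
  · rw [if_neg (by omega), min_eq_right (by omega)]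
    have hmpos : (0:ℝ) < (m:ℝ) := by exact_mod_cast hm
    have hfac : ((m.factorial:ℕ):ℝ) ≠ 0 := by positivity
    rcases le_or_gt j m with h2 | h2
    · -- j = m
      have hjm : j = m := by omega
      subst hjm
      rw [if_pos le_rfl]
      have h3 : j + 1 - j = 1 := by omega
      rw [h3, pow_one]
      field_simp
    · rw [if_neg (by omega)]
      have h3 : j + 1 - m = (j - m) + 1 := by omega
      rw [h3, pow_succ]
      field_simp

lemma bq_lc (m : ℕ) (hm : 1 ≤ m) :
    ∀ j k, j ≤ k → bq m j * bq m (k+1) ≤ bq m (j+1) * bq m k := by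
  intro j k hjk
  have e1 := bq_succ m hm j
  have e2 := bq_succ m hm k
  have hpq : ((min (j+1) m : ℕ):ℝ) ≤ ((min (k+1) m : ℕ):ℝ) :=
    Nat.cast_le.2 (min_le_min (by omega) le_rfl)
  have ha := bq_pos m hm (j+1)
  have hk1 := bq_pos m hm (k+1)
  calc bq m j * bq m (k+1)
      = bq m (j+1) * ((min (j+1) m : ℕ):ℝ) * bq m (k+1) := by rw [e1]
    _ ≤ bq m (j+1) * ((min (k+1) m : ℕ):ℝ) * bq m (k+1) :=
        mul_le_mul_of_nonneg_right (mul_le_mul_of_nonneg_left hpq ha.le) hk1.le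
    _ = bq m (j+1) * bq m k := by rw [← e2]; ring

lemma aCoef_eq (m : ℕ) (hm : 1 ≤ m) (j : ℕ) (r : ℝ) :
    aCoef m j r = bq m j * r^j := by
  unfold aCoef bq
  split_ifs with h
  · rw [div_eq_mul_inv, one_div]; ring
  · have hmj : m + (j - m) = j := by omega
    have hmpos : (0:ℝ) < (m:ℝ) := by exact_mod_cast hm
    have hfac : ((m.factorial:ℕ):ℝ) ≠ 0 := by positivity
    rw [div_pow, div_mul_div_comm, ← pow_add, hmj]
    ring

lemma Bmn_eq (m n : ℕ) (hm : 1 ≤ m) (r : ℝ) :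
    Bmn m n r = (bq m n * r^n) / Qp n (bq m) r := by
  unfold Bmn Qp
  rw [aCoef_eq m hm n r]
  congr 1
  exact Finset.sum_congr rfl (fun j _ => aCoef_eq m hm j r)

lemma rBmn (m n : ℕ) (hm : 1 ≤ m) (r : ℝ) :
    r * Bmn m n r = gfun n (bq m) r := by
  rw [Bmn_eq m n hm r]
  unfold gfun
  rw [← mul_div_assoc]
  congr 1
  rw [pow_succ]
  ring
end S13

/-- with equal buffer and server-pool sizes, the PI indices coincide across
queues, so the PI index policy reduces to shortest-queue routing. -/
theorem stmt_13 (K : ℕ) (hK : 1 ≤ K) (lam : ℝ) (hlam : 0 < lam)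
    (m n : ℕ) (hm : 1 ≤ m) (hn : m < n) (μ : Fin K → ℝ) (hμ : ∀ k, 0 < μ k)
    (φ : Fin K → ℝ → ℝ) (hφ0 : ∀ k, φ k 0 = 0)
    (hφ : ∀ k, ∀ t : ℝ, 0 < t → φ k t = t * Bmn m n (t / μ k))
    -- `v` is the unique minimizer of the OBS nonlinear program
    (v : Fin K → ℝ)
    (hfeas : (∀ k, v k ∈ Set.Icc (0 : ℝ) lam) ∧ ∑ k, v k = lam)
    (hmin : ∀ w : Fin K → ℝ, ((∀ k, w k ∈ Set.Icc (0 : ℝ) lam) ∧ ∑ k, w k = lam) →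
      ∑ k, φ k (v k) ≤ ∑ k, φ k (w k))
    (huniq : ∀ w : Fin K → ℝ, ((∀ k, w k ∈ Set.Icc (0 : ℝ) lam) ∧ ∑ k, w k = lam) →
      (∀ u : Fin K → ℝ, ((∀ k, u k ∈ Set.Icc (0 : ℝ) lam) ∧ ∑ k, u k = lam) →
        ∑ k, φ k (w k) ≤ ∑ k, φ k (u k)) → w = v) :
    ∀ x : ℕ, x < n → ∀ k l : Fin K,
      piIndex m n (v k / μ k) x = piIndex m n (v l / μ l) x := by
  classical
  have hN : 1 ≤ n := by omega
  have hcpos := S13.bq_pos m hm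
  have hlc := S13.bq_lc m hm
  have hconv := S13.gfun_convexOn n (S13.bq m) hN hcpos hlc
  haveI : Nonempty (Fin K) := ⟨⟨0, hK⟩⟩
  set G : ℝ → ℝ := S13.gfun n (S13.bq m) with hG
  set T : ℝ := ∑ k, μ k with hT
  have hTpos : 0 < T := Finset.sum_pos (fun k _ => hμ k) Finset.univ_nonempty
  set cst : ℝ := lam / T with hcstdef
  have hcst : 0 < cst := div_pos hlam hTpos
  set w : Fin K → ℝ := fun k => μ k * cst with hw
  -- feasibility of w
  have hfeasw : (∀ k, w k ∈ Set.Icc (0 : ℝ) lam) ∧ ∑ k, w k = lam := by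
    constructor
    · intro k
      constructor
      · exact mul_nonneg (hμ k).le hcst.le
      · show μ k * cst ≤ lam
        have h1 : μ k ≤ T := Finset.single_le_sum (f := μ)
          (fun i _ => (hμ i).le) (Finset.mem_univ k)
        have h2 : μ k * cst ≤ T * cst := mul_le_mul_of_nonneg_right h1 hcst.le
        have h3 : T * cst = lam := by
          rw [hcstdef, mul_comm, div_mul_cancel₀ lam hTpos.ne']
        linarith
    · have : ∑ k, w k = T * cst := by
        rw [hw, hT, Finset.sum_mul]
      rw [this, hcstdef, mul_comm, div_mul_cancel₀ lam hTpos.ne']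
  -- value of φ at w
  have hGzero : G 0 = 0 := by
    rw [hG]
    unfold S13.gfun
    rw [zero_pow (by omega : n + 1 ≠ 0)]
    simp
  have hφu : ∀ (k : Fin K) (y : ℝ), 0 ≤ y → φ k y = μ k * G (y / μ k) := by
    intro k y hy
    rcases eq_or_lt_of_le hy with h0 | h0
    · rw [← h0, hφ0 k]
      rw [show (0:ℝ) / μ k = 0 by simp, hGzero, mul_zero]
    · rw [hφ k y h0, hG, ← S13.rBmn m n hm (y / μ k)]
      have h5 : μ k * (y / μ k) = y := by
        rw [mul_comm, div_mul_cancel₀ y (hμ k).ne']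
      rw [← mul_assoc, h5]
  -- w is a global minimizer
  have hminw : ∀ u : Fin K → ℝ, ((∀ k, u k ∈ Set.Icc (0 : ℝ) lam) ∧ ∑ k, u k = lam) →
      ∑ k, φ k (w k) ≤ ∑ k, φ k (u k) := by
    intro u ⟨hu1, hu2⟩
    have hval : ∀ k, φ k (w k) = μ k * G cst := by
      intro k
      rw [hφu k (w k) (mul_nonneg (hμ k).le hcst.le)]
      congr 2
      rw [hw]
      simp only
      rw [mul_div_cancel_left₀ _ (hμ k).ne']
    have hvalu : ∀ k, φ k (u k) = μ k * G (u k / μ k) := fun k =>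
      hφu k (u k) (hu1 k).1
    simp only [hval, hvalu]
    -- Jensen
    have hJ := hconv.map_centerMass_le (t := Finset.univ) (w := μ)
      (p := fun k => u k / μ k) (fun i _ => (hμ i).le)
      (by rw [← hT]; exact hTpos)
      (fun i _ => Set.mem_Ici.2 (div_nonneg (hu1 i).1 (hμ i).le))
    have hcm : Finset.univ.centerMass μ (fun k => u k / μ k) = cst := by
      rw [Finset.centerMass]
      simp only [smul_eq_mul]
      have h6 : ∑ k, μ k * (u k / μ k) = lam := by
        rw [← hu2]
        exact Finset.sum_congr rfl (fun k _ => by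
          rw [mul_comm, div_mul_cancel₀ (u k) (hμ k).ne'])
      rw [h6, ← hT, inv_mul_eq_div]
    have hcm2 : Finset.univ.centerMass μ (G ∘ fun k => u k / μ k)
        = T⁻¹ * ∑ k, μ k * G (u k / μ k) := by
      rw [Finset.centerMass]
      simp only [smul_eq_mul, Function.comp]
      rw [hT]
    rw [hcm, hcm2] at hJ
    have h7 : ∑ k, μ k * G cst = T * G cst := by
      rw [hT, Finset.sum_mul]
    rw [h7]
    have h8 := mul_le_mul_of_nonneg_left hJ hTpos.le
    rw [← mul_assoc, mul_inv_cancel₀ hTpos.ne', one_mul] at h8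
    exact h8
  -- uniqueness forces v = w
  have hwv : w = v := huniq w hfeasw hminw
  have hvc : ∀ k, v k / μ k = cst := by
    intro k
    rw [← hwv, hw]
    simp only
    rw [mul_div_cancel_left₀ _ (hμ k).ne']
  intro x _ k l
  rw [hvc k, hvc l]
end

section
/- Let m ≥ 1 and n ≥ m be integers and r > 0 a real, and set ρ = r/m. If r ≠ m, then 1 − ρ + ρ·(1 − ρ^{n−m})·B_m(r) ≠ 0 and B_{m,n}(r) = ρ^{n−m}·(1−ρ)·B_m(r) / (1 − ρ + ρ·(1 − ρ^{n−m})·B_m(r)). If r = m, then B_{m,n}(m) = B_m(m) / (1 + (n − m)·B_m(m)). -/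
/-- expression of `B_{m,n}(r)` in terms of the Erlang-B function. -/
theorem stmt_14 (m n : ℕ) (hm : 1 ≤ m) (hn : m ≤ n) (r : ℝ) (hr : 0 < r)
    (ρ : ℝ) (hρ : ρ = r / (m : ℝ)) :
    (r ≠ (m : ℝ) →
      1 - ρ + ρ * (1 - ρ ^ (n - m)) * erlangB m r ≠ 0 ∧
      Bmn m n r =
        ρ ^ (n - m) * (1 - ρ) * erlangB m r /
          (1 - ρ + ρ * (1 - ρ ^ (n - m)) * erlangB m r)) ∧
    (r = (m : ℝ) →
      Bmn m n (m : ℝ) = erlangB m (m : ℝ) / (1 + ((n : ℝ) - (m : ℝ)) * erlangB m (m : ℝ))) := by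
  have hm0 : (0:ℝ) < (m:ℝ) := by exact_mod_cast hm
  have hρ0 : 0 < ρ := by rw [hρ]; positivity
  have hsum : ∑ j ∈ Finset.range (n+1), aCoef m j r
      = (∑ j ∈ Finset.range (m+1), r ^ j / (Nat.factorial j : ℝ))
        + (r ^ m / (Nat.factorial m : ℝ)) * ∑ k ∈ Finset.range (n - m), ρ^(k+1) := by
    have h1 : n + 1 = (m+1) + (n - m) := by omega
    rw [h1, Finset.sum_range_add]
    congr 1
    · apply Finset.sum_congr rfl
      intro j hj
      have : j ≤ m := by have := Finset.mem_range.mp hj; omega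
      simp [aCoef, this]
    · rw [Finset.mul_sum]
      apply Finset.sum_congr rfl
      intro k _
      have h2 : ¬ (m + 1 + k ≤ m) := by omega
      have h3 : m + 1 + k - m = k + 1 := by omega
      simp [aCoef, h2, h3, hρ]
  have han : aCoef m n r = (r ^ m / (Nat.factorial m : ℝ)) * ρ^(n-m) := by
    rcases Nat.eq_or_lt_of_le hn with h | h
    · have h0 : n - m = 0 := by omega
      simp [aCoef, ← h, h0]
    · have h2 : ¬ (n ≤ m) := by omega
      simp [aCoef, h2, hρ]
  set S := ∑ j ∈ Finset.range (m+1), r ^ j / (Nat.factorial j : ℝ) with hS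
  set A := r ^ m / (Nat.factorial m : ℝ) with hA
  have hSpos : 0 < S := by
    apply Finset.sum_pos
    · intro i _; positivity
    · exact ⟨0, Finset.mem_range.mpr (Nat.succ_pos m)⟩
  have hApos : 0 < A := by rw [hA]; positivity
  set T := ∑ j ∈ Finset.range (n+1), aCoef m j r with hT
  have hTpos : 0 < T := by
    rw [hsum]
    have : 0 ≤ A * ∑ k ∈ Finset.range (n-m), ρ^(k+1) := by positivity
    linarith
  have hB : erlangB m r = A / S := rfl
  have hBmn : Bmn m n r = A * ρ^(n-m) / T := by rw [Bmn, han]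
  constructor
  · intro hrm
    have hρ1 : ρ ≠ 1 := by
      rw [hρ]
      intro h
      apply hrm
      field_simp at h
      exact h
    have hρ1' : ρ - 1 ≠ 0 := sub_ne_zero.mpr hρ1
    have hgeom : ∑ k ∈ Finset.range (n-m), ρ^(k+1) = ρ * ((ρ^(n-m) - 1)/(ρ - 1)) := by
      have : ∀ k, ρ^(k+1) = ρ * ρ^k := fun k => by ring
      simp_rw [this]
      rw [← Finset.mul_sum, geom_sum_eq hρ1]
    have hT' : T = S + A * (ρ * ((ρ^(n-m) - 1)/(ρ - 1))) := by rw [hsum, hgeom]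
    have hDS : (1 - ρ + ρ*(1-ρ^(n-m))*(A/S)) * S = (1-ρ)*T := by
      rw [hT']; field_simp; ring
    have h1ρ : (1:ℝ) - ρ ≠ 0 := by intro h'; apply hρ1; linarith
    have hD : 1 - ρ + ρ*(1-ρ^(n-m))*(A/S) ≠ 0 := by
      intro h
      rw [h, zero_mul] at hDS
      exact (mul_ne_zero h1ρ hTpos.ne') hDS.symm
    refine ⟨by rw [hB]; exact hD, ?_⟩
    rw [hBmn, hB, div_eq_div_iff hTpos.ne' hD]
    have hDval : (1 - ρ + ρ*(1-ρ^(n-m))*(A/S)) = (1-ρ)*T / S := by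
      rw [← hDS]; field_simp
    rw [hDval]
    field_simp
  · intro hrm
    subst hrm
    have hρ1 : ρ = 1 := by rw [hρ, div_self hm0.ne']
    have hgeom : ∑ k ∈ Finset.range (n-m), ρ^(k+1) = (n-m : ℕ) := by
      simp [hρ1]
    have hT' : T = S + A * (n-m : ℕ) := by rw [hsum, hgeom]
    have hnm : ((n:ℝ) - (m:ℝ)) = ((n - m : ℕ) : ℝ) := by
      rw [Nat.cast_sub hn]
    rw [hBmn, hB, hρ1, one_pow, mul_one, hT', hnm]
    have hden : S + A * ((n-m:ℕ):ℝ) ≠ 0 := by positivity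
    have hden2 : 1 + ((n-m:ℕ):ℝ) * (A/S) ≠ 0 := by positivity
    rw [div_eq_div_iff hden hden2]
    field_simp
end

section
/- Let m ≥ 1 be an integer. The Erlang-B function r ↦ B_m(r) is differentiable on (0,∞), and for every r > 0 its derivative satisfies B_m'(r) = ((m − r + r·B_m(r))/r)·B_m(r). In particular, B_m'(m) = B_m(m)^2. -/
lemma S_pos' (m : ℕ) {r : ℝ} (hr : 0 < r) :
    0 < ∑ j ∈ Finset.range (m + 1), r ^ j / (Nat.factorial j : ℝ) := by
  apply Finset.sum_pos
  · intro j _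
    positivity
  · exact ⟨0, Finset.mem_range.mpr (Nat.succ_pos m)⟩

lemma hasDerivAt_S' (m : ℕ) (r : ℝ) :
    HasDerivAt (fun x : ℝ => ∑ j ∈ Finset.range (m + 1), x ^ j / (Nat.factorial j : ℝ))
      ((∑ j ∈ Finset.range (m + 1), r ^ j / (Nat.factorial j : ℝ))
        - r ^ m / (Nat.factorial m : ℝ)) r := by
  have h : HasDerivAt (fun x : ℝ => ∑ j ∈ Finset.range (m + 1), x ^ j / (Nat.factorial j : ℝ))
      (∑ j ∈ Finset.range (m + 1), (j : ℝ) * r ^ (j - 1) / (Nat.factorial j : ℝ)) r := by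
    apply HasDerivAt.fun_sum
    intro j _
    exact (hasDerivAt_pow j r).div_const _
  convert h using 1
  rw [Finset.sum_range_succ (fun j => r ^ j / (Nat.factorial j : ℝ)) m,
    Finset.sum_range_succ' (fun j => (j : ℝ) * r ^ (j - 1) / (Nat.factorial j : ℝ)) m]
  simp only [Nat.cast_zero, zero_mul, zero_div, add_zero, add_sub_cancel_right]
  apply Finset.sum_congr rfl
  intro i _
  have hi : (Nat.factorial i : ℝ) ≠ 0 := Nat.cast_ne_zero.mpr i.factorial_ne_zero
  rw [Nat.factorial_succ, Nat.add_sub_cancel]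
  push_cast
  field_simp

lemma hasDerivAt_erlangB (m : ℕ) (hm : 1 ≤ m) {r : ℝ} (hr : 0 < r) :
    HasDerivAt (erlangB m)
      ((((m : ℝ) - r + r * erlangB m r) / r) * erlangB m r) r := by
  have hSpos := S_pos' m hr
  have hN : HasDerivAt (fun x : ℝ => x ^ m / (Nat.factorial m : ℝ))
      (((m : ℕ) : ℝ) * r ^ (m - 1) / (Nat.factorial m : ℝ)) r :=
    (hasDerivAt_pow m r).div_const _
  have h := hN.fun_div (hasDerivAt_S' m r) (ne_of_gt hSpos)
  have he : erlangB m = fun x : ℝ =>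
      (x ^ m / (Nat.factorial m : ℝ)) /
        ∑ j ∈ Finset.range (m + 1), x ^ j / (Nat.factorial j : ℝ) := rfl
  rw [he]
  refine h.congr_deriv ?_
  set S := ∑ j ∈ Finset.range (m + 1), r ^ j / (Nat.factorial j : ℝ) with hS
  have hrm : r ^ (m - 1) * r = r ^ m := by
    rw [← pow_succ, Nat.sub_add_cancel hm]
  have hfac : (Nat.factorial m : ℝ) ≠ 0 := Nat.cast_ne_zero.mpr m.factorial_ne_zero
  beta_reduce
  rw [← hS]
  field_simp
  ring_nf
  rw [← hrm]
  ring

/-- derivative of the Erlang-B function. -/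
theorem stmt_16 (m : ℕ) (hm : 1 ≤ m) :
    (∀ r : ℝ, 0 < r → DifferentiableAt ℝ (erlangB m) r) ∧
    (∀ r : ℝ, 0 < r →
      deriv (erlangB m) r = (((m : ℝ) - r + r * erlangB m r) / r) * erlangB m r) ∧
    deriv (erlangB m) (m : ℝ) = (erlangB m (m : ℝ)) ^ 2 := by
  have hmr : (0 : ℝ) < (m : ℝ) := by exact_mod_cast Nat.lt_of_lt_of_le Nat.zero_lt_one hm
  refine ⟨fun r hr => (hasDerivAt_erlangB m hm hr).differentiableAt,
    fun r hr => (hasDerivAt_erlangB m hm hr).deriv, ?_⟩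
  rw [(hasDerivAt_erlangB m hm hmr).deriv]
  rw [sub_self, zero_add, mul_div_assoc]
  field_simp [ne_of_gt hmr]
end

section
/- Let m ≥ 1 be an integer. For every r > 0 one has m − r + r·B_m(r) > 0, so that the Erlang-C function C_m(r) = m·B_m(r) / (m − r + r·B_m(r)) is well defined and differentiable on (0,∞), and its derivative at r = m satisfies C_m'(m) = (1 − B_m(m)) / (m·B_m(m)). -/
/-- Erlang-C function `C_m(r)`. -/
noncomputable def erlangC (m : ℕ) (r : ℝ) : ℝ :=
  (m : ℝ) * erlangB m r / ((m : ℝ) - r + r * erlangB m r)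


noncomputable def Spoly (m : ℕ) (r : ℝ) : ℝ :=
  ∑ j ∈ Finset.range (m + 1), r ^ j / (Nat.factorial j : ℝ)

noncomputable def Dpoly (m : ℕ) (r : ℝ) : ℝ :=
  ∑ j ∈ Finset.range (m + 1), ((m : ℝ) - (j : ℝ)) * r ^ j / (Nat.factorial j : ℝ)

lemma Spoly_pos (m : ℕ) {r : ℝ} (hr : 0 < r) : 0 < Spoly m r := by
  apply Finset.sum_pos
  · intro j _; positivity
  · exact ⟨0, Finset.mem_range.mpr (Nat.succ_pos m)⟩

lemma Dpoly_pos (m : ℕ) (hm : 1 ≤ m) {r : ℝ} (hr : 0 < r) : 0 < Dpoly m r := by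
  apply Finset.sum_pos'
  · intro j hj
    have hj' : j ≤ m := Nat.lt_succ_iff.mp (Finset.mem_range.mp hj)
    have : (j : ℝ) ≤ (m : ℝ) := by exact_mod_cast hj'
    have h1 : (0:ℝ) ≤ (m : ℝ) - j := by linarith
    positivity
  · refine ⟨0, Finset.mem_range.mpr (Nat.succ_pos m), ?_⟩
    simp only [Nat.cast_zero, pow_zero, Nat.factorial_zero, Nat.cast_one]
    have : (1:ℝ) ≤ (m:ℝ) := by exact_mod_cast hm
    norm_num; linarith

lemma key_identity (m : ℕ) (r : ℝ) :
    ((m : ℝ) - r) * Spoly m r + r * (r ^ m / (Nat.factorial m : ℝ)) = Dpoly m r := by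
  have h1 : r * Spoly m r
      = (∑ k ∈ Finset.range m, r ^ (k+1) / (Nat.factorial k : ℝ)) + r ^ (m+1) / (Nat.factorial m : ℝ) := by
    rw [Spoly, Finset.mul_sum, Finset.sum_range_succ]
    congr 1
    · apply Finset.sum_congr rfl; intro k _; rw [pow_succ]; ring
    · rw [pow_succ]; ring
  have h2 : (∑ j ∈ Finset.range (m+1), (j : ℝ) * r ^ j / (Nat.factorial j : ℝ))
      = ∑ k ∈ Finset.range m, r ^ (k+1) / (Nat.factorial k : ℝ) := by
    rw [Finset.sum_range_succ']
    simp only [Nat.cast_zero, zero_mul, Nat.factorial_zero, Nat.cast_one, zero_div, add_zero]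
    apply Finset.sum_congr rfl; intro k _
    rw [Nat.factorial_succ]
    push_cast
    have hk : ((k:ℝ)+1) ≠ 0 := by positivity
    field_simp
  have h3 : Dpoly m r = (m : ℝ) * Spoly m r - ∑ j ∈ Finset.range (m+1), (j : ℝ) * r ^ j / (Nat.factorial j : ℝ) := by
    rw [Dpoly, Spoly, Finset.mul_sum, ← Finset.sum_sub_distrib]
    apply Finset.sum_congr rfl; intro j _; ring
  rw [h3, h2]
  have hp : r ^ (m+1) = r * r ^ m := by rw [pow_succ]; ring
  rw [hp] at h1
  linear_combination -h1

lemma deriv_sum_identity (m : ℕ) (r : ℝ) :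
    (∑ j ∈ Finset.range (m + 1), ((m : ℝ) - (j : ℝ)) * ((j : ℝ) * r ^ (j - 1)) / (Nat.factorial j : ℝ))
      = Dpoly m r - Spoly m r + r ^ m / (Nat.factorial m : ℝ) := by
  rw [Finset.sum_range_succ']
  simp only [Nat.cast_zero, zero_mul, mul_zero, Nat.factorial_zero, Nat.cast_one, zero_div, add_zero]
  have hL : ∀ k ∈ Finset.range m,
      ((m : ℝ) - (k + 1 : ℕ)) * (((k + 1 : ℕ) : ℝ) * r ^ ((k + 1) - 1)) / (Nat.factorial (k + 1) : ℝ)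
        = ((m : ℝ) - 1 - k) * r ^ k / (Nat.factorial k : ℝ) := by
    intro k _
    rw [Nat.factorial_succ]
    push_cast
    have hk : ((k : ℝ) + 1) ≠ 0 := by positivity
    have hf : (Nat.factorial k : ℝ) ≠ 0 := by positivity
    field_simp
    ring
  rw [Finset.sum_congr rfl hL]
  have hR : Dpoly m r - Spoly m r
      = (∑ k ∈ Finset.range m, ((m : ℝ) - 1 - k) * r ^ k / (Nat.factorial k : ℝ))
          - r ^ m / (Nat.factorial m : ℝ) := by
    rw [Dpoly, Spoly, ← Finset.sum_sub_distrib, Finset.sum_range_succ]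
    have : ∀ j ∈ Finset.range m,
        ((m : ℝ) - (j : ℝ)) * r ^ j / (Nat.factorial j : ℝ) - r ^ j / (Nat.factorial j : ℝ)
          = ((m : ℝ) - 1 - j) * r ^ j / (Nat.factorial j : ℝ) := by
      intro j _; ring
    rw [Finset.sum_congr rfl this]
    ring
  rw [hR]; ring

lemma hasDerivAt_Dpoly (m : ℕ) (r : ℝ) :
    HasDerivAt (Dpoly m) (Dpoly m r - Spoly m r + r ^ m / (Nat.factorial m : ℝ)) r := by
  rw [← deriv_sum_identity]
  apply HasDerivAt.fun_sum
  intro j _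
  exact ((hasDerivAt_pow j r).const_mul ((m : ℝ) - (j : ℝ))).div_const _

lemma erlangB_eq (m : ℕ) (r : ℝ) :
    erlangB m r = (r ^ m / (Nat.factorial m : ℝ)) / Spoly m r := rfl

lemma erlangC_eq (m : ℕ) (hm : 1 ≤ m) {r : ℝ} (hr : 0 < r) :
    erlangC m r = (m : ℝ) * (r ^ m / (Nat.factorial m : ℝ)) / Dpoly m r := by
  have hS := (Spoly_pos m hr).ne'
  have hD := (Dpoly_pos m hm hr).ne'
  have hf : (Nat.factorial m : ℝ) ≠ 0 := by positivity
  have hden : (m : ℝ) - r + r * erlangB m r = Dpoly m r / Spoly m r := by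
    rw [erlangB_eq, eq_div_iff hS]
    have h1 : (r ^ m / (Nat.factorial m : ℝ)) / Spoly m r * Spoly m r
        = r ^ m / (Nat.factorial m : ℝ) := div_mul_cancel₀ _ hS
    linear_combination key_identity m r + r * h1
  rw [erlangC, hden, erlangB_eq]
  field_simp

/-- well-definedness and derivative at `r = m` of the Erlang-C function. -/
theorem stmt_17 (m : ℕ) (hm : 1 ≤ m) :
    (∀ r : ℝ, 0 < r → 0 < (m : ℝ) - r + r * erlangB m r) ∧
    (∀ r : ℝ, 0 < r → DifferentiableAt ℝ (erlangC m) r) ∧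
    deriv (erlangC m) (m : ℝ) = (1 - erlangB m (m : ℝ)) / ((m : ℝ) * erlangB m (m : ℝ)) := by
  have hf : (Nat.factorial m : ℝ) ≠ 0 := by positivity
  have hden : ∀ r : ℝ, 0 < r →
      (m : ℝ) - r + r * erlangB m r = Dpoly m r / Spoly m r := by
    intro r hr
    have hS := (Spoly_pos m hr).ne'
    rw [erlangB_eq, eq_div_iff hS]
    have h1 : (r ^ m / (Nat.factorial m : ℝ)) / Spoly m r * Spoly m r
        = r ^ m / (Nat.factorial m : ℝ) := div_mul_cancel₀ _ hS
    linear_combination key_identity m r + r * h1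
  have hg : ∀ r : ℝ, 0 < r →
      HasDerivAt (fun x => (m : ℝ) * (x ^ m / (Nat.factorial m : ℝ)) / Dpoly m x)
        (((m : ℝ) * ((m : ℝ) * r ^ (m - 1) / (Nat.factorial m : ℝ)) * Dpoly m r
            - (m : ℝ) * (r ^ m / (Nat.factorial m : ℝ))
              * (Dpoly m r - Spoly m r + r ^ m / (Nat.factorial m : ℝ))) / Dpoly m r ^ 2) r := by
    intro r hr
    exact (((hasDerivAt_pow m r).div_const _).const_mul (m : ℝ)).div
      (hasDerivAt_Dpoly m r) (Dpoly_pos m hm hr).ne'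
  have heq : ∀ r : ℝ, 0 < r →
      erlangC m =ᶠ[nhds r] fun x => (m : ℝ) * (x ^ m / (Nat.factorial m : ℝ)) / Dpoly m x := by
    intro r hr
    exact Filter.eventuallyEq_of_mem (Ioi_mem_nhds hr) (fun x hx => erlangC_eq m hm hx)
  refine ⟨?_, ?_, ?_⟩
  · intro r hr
    rw [hden r hr]
    exact div_pos (Dpoly_pos m hm hr) (Spoly_pos m hr)
  · intro r hr
    exact ((heq r hr).differentiableAt_iff).mpr (hg r hr).differentiableAt
  · have hm0 : (0 : ℝ) < (m : ℝ) := by exact_mod_cast hm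
    have hS := (Spoly_pos m hm0).ne'
    rw [(heq (m : ℝ) hm0).deriv_eq, (hg (m : ℝ) hm0).deriv, erlangB_eq]
    have hDm : Dpoly m (m : ℝ) = (m : ℝ) * ((m : ℝ) ^ m / (Nat.factorial m : ℝ)) := by
      linear_combination -(key_identity m (m : ℝ))
    have hpow : (m : ℝ) * (m : ℝ) ^ (m - 1) = (m : ℝ) ^ m := by
      rw [← pow_succ']
      congr 1
      omega
    rw [hDm, ← hpow]
    have hA : (0 : ℝ) < (m : ℝ) ^ m / (Nat.factorial m : ℝ) := by positivity
    field_simp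
    ring
end
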